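/- arXiv:1905.10287 — 4 statements merged into one kernel-verified Lean document; each statement's English description precedes it below -/
import Mathlib

section
/- The Sorgenfrey plane 𝕊² is a perfect topological space that does not possess the OB-property. -/
open Set Filter Topology

namespace Selectors

variable {X : Type*}

/-- Kinds of covers / of pointwise properties: `o` (ordinary covers / 𝒪),
`omega` (ω-covers / Ω), `gamma` (γ-covers / Γ). -/
inductive CoverKind : Type
  | o | omega | gamma

/-- `f` is a bounded upper semicontinuous real function on `X`. -/
def IsUSCb [TopologicalSpace X] (f : X → ℝ) : Prop :=
  (∀ a : ℝ, IsOpen {x | f x < a}) ∧ ∃ M : ℝ, ∀ x, |f x| ≤ M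

/-- `USC*_p(X)`: the set of bounded upper semicontinuous real functions on `X`,
regarded as a subset of `X → ℝ` with the product (pointwise convergence) topology. -/
def USCb (X : Type*) [TopologicalSpace X] : Set (X → ℝ) := {f | IsUSCb f}

/-- `C*_p(X)`: the set of bounded continuous real functions on `X`. -/
def Cb (X : Type*) [TopologicalSpace X] : Set (X → ℝ) :=
  {f | Continuous f ∧ ∃ M : ℝ, ∀ x, |f x| ≤ M}

/-- `𝒰` is a cover of `X`. -/
def IsCover (𝒰 : Set (Set X)) : Prop := ∀ x : X, ∃ U ∈ 𝒰, x ∈ U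

/-- The (not necessarily open) cover condition of the given kind:
an `o`-cover is a cover; an ω-cover is a cover not containing `X` such that every
finite subset of `X` is contained in a member; a γ-cover is an infinite cover such
that each point belongs to all but finitely many members. -/
def kindSets (k : CoverKind) (𝒰 : Set (Set X)) : Prop :=
  match k with
  | .o => IsCover 𝒰
  | .omega => IsCover 𝒰 ∧ Set.univ ∉ 𝒰 ∧ ∀ F : Set X, F.Finite → ∃ U ∈ 𝒰, F ⊆ U
  | .gamma => IsCover 𝒰 ∧ 𝒰.Infinite ∧ ∀ x : X, {U ∈ 𝒰 | x ∉ U}.Finite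

/-- The family `𝒪(X)`, `Ω(X)` or `Γ(X)` of open covers/ω-covers/γ-covers of `X`. -/
def OpenKindCovers (X : Type*) [TopologicalSpace X] (k : CoverKind) : Set (Set (Set X)) :=
  {𝒰 | (∀ U ∈ 𝒰, IsOpen U) ∧ kindSets k 𝒰}

/-- The selection principle `S₁(A, B)`. -/
def S1 {α : Type*} (A B : Set (Set α)) : Prop :=
  ∀ u : ℕ → Set α, (∀ n, u n ∈ A) →
    ∃ sel : ℕ → α, (∀ n, sel n ∈ u n) ∧ Set.range sel ∈ B

/-- The selection principle `S_fin(A, B)`. -/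
def Sfin {α : Type*} (A B : Set (Set α)) : Prop :=
  ∀ u : ℕ → Set α, (∀ n, u n ∈ A) →
    ∃ V : ℕ → Set α, (∀ n, V n ⊆ u n ∧ (V n).Finite) ∧ (⋃ n, V n) ∈ B

/-- Property `(𝒪_h)` of a family `F` of real functions. -/
def PropO (h : X → ℝ) (F : Set (X → ℝ)) : Prop :=
  ∀ x : X, h x ∈ closure ((fun f : X → ℝ => f x) '' F)

/-- Property `(Ω_h)`: `h ∉ F` and `h` belongs to the closure of `F` in `ℝ^X`. -/
def PropOmega (h : X → ℝ) (F : Set (X → ℝ)) : Prop :=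
  h ∉ F ∧ h ∈ closure F

/-- Property `(Γ_h)`. -/
def PropGamma (h : X → ℝ) (F : Set (X → ℝ)) : Prop :=
  F.Infinite ∧ ∀ ε : ℝ, 0 < ε → ∀ x : X, {f ∈ F | ε ≤ |f x - h x|}.Finite

/-- Property `(Φ_h)` for `Φ = 𝒪, Ω, Γ`. -/
def kindProp (k : CoverKind) (h : X → ℝ) (F : Set (X → ℝ)) : Prop :=
  match k with
  | .o => PropO h F
  | .omega => PropOmega h F
  | .gamma => PropGamma h F

/-- The family `Φ_h(H) = {F ⊆ H : F has (Φ_h) and ∀ f ∈ F, f ≥ h ∧ f - h ∈ H}`. -/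
def PhiH (k : CoverKind) (h : X → ℝ) (H : Set (X → ℝ)) : Set (Set (X → ℝ)) :=
  {F | F ⊆ H ∧ kindProp k h F ∧ ∀ f ∈ F, h ≤ f ∧ f - h ∈ H}

/-- `F ⊆ H` is sequentially dense in `H` (with respect to pointwise convergence). -/
def SeqDenseIn (F H : Set (X → ℝ)) : Prop :=
  F ⊆ H ∧ ∀ f ∈ H, ∃ u : ℕ → (X → ℝ), (∀ n, u n ∈ F) ∧
    Filter.Tendsto u Filter.atTop (nhds f)

/-- `F ⊆ H` is dense in `H`. -/
def DenseIn (F H : Set (X → ℝ)) : Prop :=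
  F ⊆ H ∧ H ⊆ closure F

/-- `F` is pointwise dense: `{f x : f ∈ F}` is dense in `ℝ` for every `x`. -/
def PointwiseDense (F : Set (X → ℝ)) : Prop :=
  ∀ x : X, Dense {y : ℝ | ∃ f ∈ F, f x = y}

/-- `F ⊆ H` is upper sequentially dense in `H`. -/
def UpperSeqDenseIn (F H : Set (X → ℝ)) : Prop :=
  F ⊆ H ∧ ∀ f ∈ H, ∃ u : ℕ → (X → ℝ),
    (∀ n, u n ∈ F ∧ f ≤ u n ∧ u n - f ∈ H) ∧
    Filter.Tendsto u Filter.atTop (nhds f)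

/-- `F ⊆ H` is upper dense in `H`: for every `f ∈ H` the set
`{h ∈ F : h ≥ f ∧ h - f ∈ H}` is dense in `{h ∈ H : h ≥ f}`. -/
def UpperDenseIn (F H : Set (X → ℝ)) : Prop :=
  F ⊆ H ∧ ∀ f ∈ H, {g | g ∈ H ∧ f ≤ g} ⊆ closure {g | g ∈ F ∧ f ≤ g ∧ g - f ∈ H}

/-- `𝒮(H)`: the family of sequentially dense subsets of `H`. -/
def Sfam (H : Set (X → ℝ)) : Set (Set (X → ℝ)) := {F | SeqDenseIn F H}

/-- `𝒟(H)`: the family of dense subsets of `H`. -/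
def Dfam (H : Set (X → ℝ)) : Set (Set (X → ℝ)) := {F | DenseIn F H}

/-- `𝒫(H)`: the family of pointwise dense subsets of `H`. -/
def Pfam (H : Set (X → ℝ)) : Set (Set (X → ℝ)) := {F | F ⊆ H ∧ PointwiseDense F}

/-- `Φ̃↑(H)`: for `Φ = Γ` the upper sequentially dense subsets, for `Φ = Ω`
the upper dense subsets, for `Φ = 𝒪` the pointwise dense subsets of `H`. -/
def upTilde (k : CoverKind) (H : Set (X → ℝ)) : Set (Set (X → ℝ)) :=
  match k with
  | .o => Pfam H
  | .omega => {F | UpperDenseIn F H}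
  | .gamma => {F | UpperSeqDenseIn F H}

/-- `H` is separable: it has a countable dense subset. -/
def SeparableSet (H : Set (X → ℝ)) : Prop := ∃ D, D.Countable ∧ DenseIn D H

/-- `H` is sequentially separable: it has a countable sequentially dense subset. -/
def SeqSeparableSet (H : Set (X → ℝ)) : Prop := ∃ D, D.Countable ∧ SeqDenseIn D H

/-- Property `(ε)`: every open ω-cover contains a countable ω-subcover. -/
def PropEps (X : Type*) [TopologicalSpace X] : Prop :=
  ∀ 𝒰 : Set (Set X), 𝒰 ∈ OpenKindCovers X CoverKind.omega →
    ∃ 𝒱 ⊆ 𝒰, 𝒱.Countable ∧ 𝒱 ∈ OpenKindCovers X CoverKind.omega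

/-- `S` is an `F_σ` set with respect to the topology `t`. -/
def IsFsigmaIn (t : TopologicalSpace X) (S : Set X) : Prop :=
  ∃ C : ℕ → Set X, (∀ n, IsClosed[t] (C n)) ∧ S = ⋃ n, C n

/-- `S` is locally closed with respect to `t`: an intersection of a `t`-open
and a `t`-closed set. -/
def IsLocallyClosedIn (t : TopologicalSpace X) (S : Set X) : Prop :=
  ∃ U F : Set X, IsOpen[t] U ∧ IsClosed[t] F ∧ S = U ∩ F

/-- `S` is a cozero set with respect to `t`. -/
def IsCozeroIn (t : TopologicalSpace X) (S : Set X) : Prop :=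
  ∃ f : X → ℝ, @Continuous X ℝ t inferInstance f ∧ S = {x | f x ≠ 0}

/-- The `OB`-property of `⟨X, t⟩`: there is a separable metrizable topology `t'`
on `X` weaker than `t` such that every locally closed subset of `⟨X, t⟩` is an
`F_σ`-set in `t'`. -/
def OBProperty (X : Type*) [t : TopologicalSpace X] : Prop :=
  ∃ t' : TopologicalSpace X,
    (∀ s : Set X, IsOpen[t'] s → IsOpen[t] s) ∧
    @TopologicalSpace.MetrizableSpace X t' ∧
    @TopologicalSpace.SeparableSpace X t' ∧
    ∀ S : Set X, IsLocallyClosedIn t S → IsFsigmaIn t' S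

/-- The `V`-property of `⟨X, t⟩`: there is a separable metrizable topology `t'`
on `X` weaker than `t` such that every cozero subset of `⟨X, t⟩` is an
`F_σ`-set in `t'`. -/
def VProperty (X : Type*) [t : TopologicalSpace X] : Prop :=
  ∃ t' : TopologicalSpace X,
    (∀ s : Set X, IsOpen[t'] s → IsOpen[t] s) ∧
    @TopologicalSpace.MetrizableSpace X t' ∧
    @TopologicalSpace.SeparableSpace X t' ∧
    ∀ S : Set X, IsCozeroIn t S → IsFsigmaIn t' S

/-- `iw(X) = ℵ₀`: `X` can be mapped by a one-to-one continuous map onto a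
Tychonoff space of countable weight. -/
def IWCountable (X : Type*) [TopologicalSpace X] : Prop :=
  ∃ (Y : Type) (tY : TopologicalSpace Y) (f : X → Y),
    @Continuous X Y _ tY f ∧ Function.Bijective f ∧
    @T35Space Y tY ∧ @SecondCountableTopology Y tY

/-- `Φ^sh(X)`: the family of open shrinkable φ-covers of `X`. -/
def ShFam (X : Type*) [TopologicalSpace X] (k : CoverKind) : Set (Set (Set X)) :=
  {𝒰 | 𝒰 ∈ OpenKindCovers X k ∧
    ∃ 𝒲 ∈ OpenKindCovers X k, ∀ W ∈ 𝒲, ∃ U ∈ 𝒰, closure W ⊆ U}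

/-- A zero set. -/
def IsZeroSet [TopologicalSpace X] (S : Set X) : Prop :=
  ∃ f : X → ℝ, Continuous f ∧ S = {x | f x = 0}

/-- A cozero set. -/
def IsCozeroSet [TopologicalSpace X] (S : Set X) : Prop :=
  ∃ f : X → ℝ, Continuous f ∧ S = {x | f x ≠ 0}

/-- `Φ^fsh_cz(X)`: the family of functionally shrinkable φ-covers of `X`
consisting of cozero sets. -/
def FshCzFam (X : Type*) [TopologicalSpace X] (k : CoverKind) : Set (Set (Set X)) :=
  {𝒰 | (∀ U ∈ 𝒰, IsCozeroSet U) ∧ kindSets k 𝒰 ∧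
    ∃ 𝒲 : Set (Set X), (∀ W ∈ 𝒲, IsZeroSet W) ∧ kindSets k 𝒲 ∧
      ∀ W ∈ 𝒲, ∃ U ∈ 𝒰, closure W ⊆ U}

/-- The function `f_{U,g}`: equal to `0` on `U` and to `1 + sup |g|` off `U`. -/
noncomputable def fU (U : Set X) (g : X → ℝ) : X → ℝ :=
  Uᶜ.indicator fun _ => 1 + ⨆ y, |g y|

/-- The family `S(𝒰) = {f_{U,g} + g : U ∈ 𝒰, g ∈ USC*_p(X)}`. -/
def SU [TopologicalSpace X] (𝒰 : Set (Set X)) : Set (X → ℝ) :=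
  {f | ∃ U ∈ 𝒰, ∃ g ∈ USCb X, f = fU U g + g}

/-- The Sorgenfrey topology on `ℝ`, generated by the half-open intervals `[a, b)`. -/
def sorgenfreyTop : TopologicalSpace ℝ :=
  TopologicalSpace.generateFrom {s | ∃ a b : ℝ, s = Set.Ico a b}

/-- The Sorgenfrey plane topology on `ℝ × ℝ`. -/
def sorgenfreyPlaneTop : TopologicalSpace (ℝ × ℝ) :=
  @instTopologicalSpaceProd ℝ ℝ sorgenfreyTop sorgenfreyTop


lemma sorg_basis :
    @TopologicalSpace.IsTopologicalBasis ℝ sorgenfreyTop {s | ∃ a b : ℝ, s = Set.Ico a b} := by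
  letI := sorgenfreyTop
  refine ⟨?_, ?_, rfl⟩
  · rintro t₁ ⟨a, b, rfl⟩ t₂ ⟨c, d, rfl⟩ x hx
    refine ⟨Set.Ico (max a c) (min b d), ⟨_, _, rfl⟩, ?_, ?_⟩
    · rw [← Set.Ico_inter_Ico]; exact hx
    · rw [← Set.Ico_inter_Ico]
  · apply Set.eq_univ_of_forall
    intro x
    exact Set.mem_sUnion.2 ⟨Set.Ico x (x + 1), ⟨x, x + 1, rfl⟩, by simp⟩

lemma plane_basis :
    @TopologicalSpace.IsTopologicalBasis (ℝ × ℝ) sorgenfreyPlaneTop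
      (Set.image2 (· ×ˢ ·) {s | ∃ a b : ℝ, s = Set.Ico a b} {s | ∃ a b : ℝ, s = Set.Ico a b}) := by
  letI := sorgenfreyTop
  exact sorg_basis.prod sorg_basis

lemma plane_isOpen_iff {U : Set (ℝ × ℝ)} :
    IsOpen[sorgenfreyPlaneTop] U ↔
      ∀ p ∈ U, ∃ ε > 0, Set.Ico p.1 (p.1 + ε) ×ˢ Set.Ico p.2 (p.2 + ε) ⊆ U := by
  letI := sorgenfreyPlaneTop
  rw [plane_basis.isOpen_iff]
  constructor
  · intro h p hp
    obtain ⟨v, hv, hpv, hvU⟩ := h p hp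
    obtain ⟨s, ⟨a, b, rfl⟩, t, ⟨c, d, rfl⟩, rfl⟩ := hv
    obtain ⟨⟨h1, h2⟩, h3, h4⟩ := hpv
    refine ⟨min (b - p.1) (d - p.2), by simp [sub_pos, h2, h4], fun y hy => ?_⟩
    obtain ⟨⟨hy1, hy2⟩, hy3, hy4⟩ := hy
    refine hvU ⟨⟨le_trans h1 hy1, ?_⟩, le_trans h3 hy3, ?_⟩
    · exact lt_of_lt_of_le hy2 (by linarith [min_le_left (b - p.1) (d - p.2)])
    · exact lt_of_lt_of_le hy4 (by linarith [min_le_right (b - p.1) (d - p.2)])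
  · intro h p hp
    obtain ⟨ε, hε, hsub⟩ := h p hp
    exact ⟨_, ⟨Set.Ico p.1 (p.1 + ε), ⟨_, _, rfl⟩, Set.Ico p.2 (p.2 + ε), ⟨_, _, rfl⟩, rfl⟩,
      ⟨⟨le_refl _, by linarith⟩, le_refl _, by linarith⟩, hsub⟩

lemma euclid_open_plane {U : Set (ℝ × ℝ)} (h : IsOpen U) : IsOpen[sorgenfreyPlaneTop] U := by
  rw [plane_isOpen_iff]
  intro p hp
  obtain ⟨ε, hε, hball⟩ := Metric.isOpen_iff.1 h p hp
  refine ⟨ε, hε, fun y hy => hball ?_⟩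
  obtain ⟨⟨h1, h2⟩, h3, h4⟩ := hy
  rw [Metric.mem_ball, Prod.dist_eq, Real.dist_eq, Real.dist_eq]
  rw [abs_of_nonneg (by linarith), abs_of_nonneg (by linarith)]
  exact max_lt (by linarith) (by linarith)

lemma euclid_closed_plane {C : Set (ℝ × ℝ)} (h : IsClosed C) : IsClosed[sorgenfreyPlaneTop] C := by
  letI := sorgenfreyPlaneTop
  rw [← isOpen_compl_iff]
  exact euclid_open_plane h.isOpen_compl

/-- Euclidean-open sets are Fσ in the Sorgenfrey plane. -/

lemma euclid_open_fsigma {V : Set (ℝ × ℝ)} (hV : IsOpen V) : IsFsigmaIn sorgenfreyPlaneTop V := by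
  refine ⟨fun n => {x | ∀ y ∈ Vᶜ, (1 : ℝ) / (n + 1) ≤ dist x y}, fun n => ?_, ?_⟩
  · apply euclid_closed_plane
    show IsClosed {x : ℝ × ℝ | ∀ y ∈ Vᶜ, (1 : ℝ) / (n + 1) ≤ dist x y}
    have : {x : ℝ × ℝ | ∀ y ∈ Vᶜ, (1 : ℝ) / (n + 1) ≤ dist x y}
        = ⋂ y ∈ Vᶜ, {x | (1 : ℝ) / (n + 1) ≤ dist x y} := by
      ext x; simp
    rw [this]
    exact isClosed_biInter fun y _ =>
      isClosed_le continuous_const (Continuous.dist continuous_id continuous_const)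
  · ext x
    simp only [Set.mem_iUnion, Set.mem_setOf_eq]
    constructor
    · intro hx
      obtain ⟨ε, hε, hball⟩ := Metric.isOpen_iff.1 hV x hx
      obtain ⟨n, hn⟩ := exists_nat_one_div_lt hε
      refine ⟨n, fun y hy => ?_⟩
      by_contra hlt
      push_neg at hlt
      exact hy (hball (by rw [Metric.mem_ball, dist_comm]; linarith))
    · rintro ⟨n, hn⟩
      by_contra hx
      have := hn x hx
      simp at this
      have : (0:ℝ) < 1 / (n+1) := by positivity
      linarith [hn x hx, dist_self x]

/-- countable unions of Fσ sets are Fσ. -/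

lemma fsigma_iUnion {X : Type*} {t : TopologicalSpace X} {S : ℕ → Set X}
    (h : ∀ n, IsFsigmaIn t (S n)) : IsFsigmaIn t (⋃ n, S n) := by
  choose C hC hS using h
  refine ⟨fun k => C k.unpair.1 k.unpair.2, fun k => hC _ _, ?_⟩
  ext x
  simp only [Set.mem_iUnion]
  constructor
  · rintro ⟨n, hx⟩
    rw [hS n] at hx
    obtain ⟨m, hm⟩ := Set.mem_iUnion.1 hx
    exact ⟨Nat.pair n m, by rwa [Nat.unpair_pair]⟩
  · rintro ⟨k, hk⟩
    exact ⟨k.unpair.1, by rw [hS]; exact Set.mem_iUnion.2 ⟨k.unpair.2, hk⟩⟩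

lemma fsigma_union {X : Type*} {t : TopologicalSpace X} {S T : Set X}
    (hS : IsFsigmaIn t S) (hT : IsFsigmaIn t T) : IsFsigmaIn t (S ∪ T) := by
  have : S ∪ T = ⋃ n : ℕ, (if n = 0 then S else T) := by
    ext x
    simp only [Set.mem_union, Set.mem_iUnion]
    constructor
    · rintro (h | h)
      exacts [⟨0, by simp [h]⟩, ⟨1, by simp [h]⟩]
    · rintro ⟨n, hn⟩
      split at hn
      exacts [Or.inl hn, Or.inr hn]
  rw [this]
  exact fsigma_iUnion fun n => by split <;> assumption

def Vone (U : Set (ℝ × ℝ)) : Set (ℝ × ℝ) :=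
  {p | ∃ ε > 0, Set.Ico p.1 (p.1 + ε) ×ˢ Set.Ioo (p.2 - ε) (p.2 + ε) ⊆ U}

def Vtwo (U : Set (ℝ × ℝ)) : Set (ℝ × ℝ) :=
  {p | ∃ ε > 0, Set.Ioo (p.1 - ε) (p.1 + ε) ×ˢ Set.Ico p.2 (p.2 + ε) ⊆ U}

def Wint (U : Set (ℝ × ℝ)) : Set (ℝ × ℝ) :=
  {p | ∃ ε > 0, Set.Ioo (p.1 - ε) (p.1 + ε) ×ˢ Set.Ioo (p.2 - ε) (p.2 + ε) ⊆ U}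

def Dset (U : Set (ℝ × ℝ)) (n : ℕ) : Set (ℝ × ℝ) :=
  {p | Set.Ico p.1 (p.1 + 1/(n+1)) ×ˢ Set.Ico p.2 (p.2 + 1/(n+1)) ⊆ U ∧ p ∉ Vone U ∧ p ∉ Vtwo U}

def Eset (U : Set (ℝ × ℝ)) (n : ℕ) : Set (ℝ × ℝ) :=
  {p | Set.Ico p.1 (p.1 + 1/(n+1)) ×ˢ Set.Ioo (p.2 - 1/(n+1)) (p.2 + 1/(n+1)) ⊆ U ∧ p ∉ Wint U}

def Fset (U : Set (ℝ × ℝ)) (n : ℕ) : Set (ℝ × ℝ) :=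
  {p | Set.Ioo (p.1 - 1/(n+1)) (p.1 + 1/(n+1)) ×ˢ Set.Ico p.2 (p.2 + 1/(n+1)) ⊆ U ∧ p ∉ Wint U}

lemma qpos (n : ℕ) : (0:ℝ) < 1/(n+1) := by positivity

lemma Wint_open (U : Set (ℝ × ℝ)) : IsOpen (Wint U) := by
  rw [Metric.isOpen_iff]
  rintro p ⟨ε, hε, hsub⟩
  refine ⟨ε/2, by linarith, fun y hy => ?_⟩
  rw [Metric.mem_ball, Prod.dist_eq, Real.dist_eq, Real.dist_eq, max_lt_iff, abs_lt, abs_lt] at hy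
  refine ⟨ε/2, by linarith, fun z hz => hsub ?_⟩
  obtain ⟨⟨h1, h2⟩, h3, h4⟩ := hz
  exact ⟨⟨by linarith [hy.1.1, hy.1.2], by linarith [hy.1.1, hy.1.2]⟩,
    by linarith [hy.2.1, hy.2.2], by linarith [hy.2.1, hy.2.2]⟩

lemma Wint_subset_Vone (U : Set (ℝ × ℝ)) : Wint U ⊆ Vone U := by
  rintro p ⟨ε, hε, hsub⟩
  refine ⟨ε, hε, fun z hz => hsub ?_⟩
  obtain ⟨⟨h1, h2⟩, h3, h4⟩ := hz
  exact ⟨⟨by linarith, h2⟩, h3, h4⟩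

lemma Wint_subset_Vtwo (U : Set (ℝ × ℝ)) : Wint U ⊆ Vtwo U := by
  rintro p ⟨ε, hε, hsub⟩
  refine ⟨ε, hε, fun z hz => hsub ?_⟩
  obtain ⟨⟨h1, h2⟩, h3, h4⟩ := hz
  exact ⟨⟨h1, h2⟩, by linarith, h4⟩

lemma Wint_subset (U : Set (ℝ × ℝ)) : Wint U ⊆ U := by
  rintro p ⟨ε, hε, hsub⟩
  exact hsub ⟨⟨by linarith, by linarith⟩, by linarith, by linarith⟩

/-- witnesses from closure points in the Sorgenfrey plane -/

lemma plane_closure_witness {S : Set (ℝ × ℝ)} {p : ℝ × ℝ}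
    (hp : p ∈ @closure _ sorgenfreyPlaneTop S) {δ : ℝ} (hδ : 0 < δ) :
    ∃ a ∈ S, p.1 ≤ a.1 ∧ a.1 < p.1 + δ ∧ p.2 ≤ a.2 ∧ a.2 < p.2 + δ := by
  letI := sorgenfreyPlaneTop
  have hbox : IsOpen[sorgenfreyPlaneTop] (Set.Ico p.1 (p.1 + δ) ×ˢ Set.Ico p.2 (p.2 + δ)) := by
    rw [plane_isOpen_iff]
    rintro y ⟨⟨h1, h2⟩, h3, h4⟩
    refine ⟨min (p.1 + δ - y.1) (p.2 + δ - y.2), by simp [sub_pos]; constructor <;> linarith,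
      fun z hz => ?_⟩
    obtain ⟨⟨g1, g2⟩, g3, g4⟩ := hz
    exact ⟨⟨le_trans h1 g1, by linarith [min_le_left (p.1 + δ - y.1) (p.2 + δ - y.2)]⟩,
      le_trans h3 g3, by linarith [min_le_right (p.1 + δ - y.1) (p.2 + δ - y.2)]⟩
  have hmem : p ∈ Set.Ico p.1 (p.1 + δ) ×ˢ Set.Ico p.2 (p.2 + δ) :=
    ⟨⟨le_refl _, by linarith⟩, le_refl _, by linarith⟩
  obtain ⟨a, ha1, ha2⟩ := mem_closure_iff.1 hp _ hbox hmem
  obtain ⟨⟨h1, h2⟩, h3, h4⟩ := ha1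
  exact ⟨a, ha2, h1, h2, h3, h4⟩

/-- Key lemma B: the Sorgenfrey closure of `Eset U n` is contained in `U`. -/

lemma Eset_closure_subset (U : Set (ℝ × ℝ)) (n : ℕ) :
    @closure _ sorgenfreyPlaneTop (Eset U n) ⊆ U := by
  intro p hp
  set q : ℝ := 1/(n+1) with hqdef
  have hq : 0 < q := qpos n
  -- no witness at scale δ ≤ q/2 has a.1 > p.1
  have hvert : ∀ δ : ℝ, 0 < δ → δ ≤ q/2 →
      ∀ a ∈ Eset U n, p.1 ≤ a.1 → a.1 < p.1 + δ → p.2 ≤ a.2 → a.2 < p.2 + δ → a.1 = p.1 := by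
    intro δ hδ hδq a haE ha1 ha2 ha3 ha4
    by_contra hne
    have ha1' : p.1 < a.1 := lt_of_le_of_ne ha1 (Ne.symm hne)
    obtain ⟨b, hbE, hb1, hb2, hb3, hb4⟩ :=
      plane_closure_witness hp (show (0:ℝ) < min δ (a.1 - p.1) by simp [hδ]; linarith)
    have hb2' : b.1 < a.1 := lt_of_lt_of_le hb2 (by
      have := min_le_right δ (a.1 - p.1); linarith)
    have hb2'' : b.1 < p.1 + δ := lt_of_lt_of_le hb2 (by
      have := min_le_left δ (a.1 - p.1); linarith)
    have hb4' : b.2 < p.2 + δ := lt_of_lt_of_le hb4 (by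
      have := min_le_left δ (a.1 - p.1); linarith)
    -- a is in the Euclidean interior of b's half-open box, hence a ∈ Wint U
    have : a ∈ Wint U := by
      refine ⟨min (a.1 - b.1) (min (b.1 + q - a.1) (min (b.2 + q - a.2) (a.2 - (b.2 - q)))),
        ?_, fun z hz => hbE.1 ?_⟩
      · simp only [lt_min_iff, sub_pos]
        refine ⟨by linarith, by linarith, by linarith, by linarith⟩
      · obtain ⟨⟨g1, g2⟩, g3, g4⟩ := hz
        have m1 : min (a.1 - b.1) (min (b.1 + q - a.1) (min (b.2 + q - a.2) (a.2 - (b.2 - q))))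
            ≤ a.1 - b.1 := min_le_left _ _
        have m2 : min (a.1 - b.1) (min (b.1 + q - a.1) (min (b.2 + q - a.2) (a.2 - (b.2 - q))))
            ≤ b.1 + q - a.1 := le_trans (min_le_right _ _) (min_le_left _ _)
        have m3 : min (a.1 - b.1) (min (b.1 + q - a.1) (min (b.2 + q - a.2) (a.2 - (b.2 - q))))
            ≤ b.2 + q - a.2 := le_trans (min_le_right _ _) (le_trans (min_le_right _ _) (min_le_left _ _))
        have m4 : min (a.1 - b.1) (min (b.1 + q - a.1) (min (b.2 + q - a.2) (a.2 - (b.2 - q))))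
            ≤ a.2 - (b.2 - q) := le_trans (min_le_right _ _) (le_trans (min_le_right _ _) (min_le_right _ _))
        exact ⟨⟨by linarith, by linarith⟩, by linarith, by linarith⟩
    exact haE.2 this
  -- take a witness at scale q/2; it sits vertically above p, and its box contains p
  obtain ⟨a, haE, ha1, ha2, ha3, ha4⟩ := plane_closure_witness hp (show (0:ℝ) < q/2 by linarith)
  have h1 : a.1 = p.1 := hvert (q/2) (by linarith) (le_refl _) a haE ha1 ha2 ha3 ha4
  apply haE.1
  rw [h1]
  exact ⟨⟨le_refl _, by linarith⟩, by linarith, by linarith⟩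

/-- Key lemma B': symmetric version for `Fset`. -/

lemma Fset_closure_subset (U : Set (ℝ × ℝ)) (n : ℕ) :
    @closure _ sorgenfreyPlaneTop (Fset U n) ⊆ U := by
  intro p hp
  set q : ℝ := 1/(n+1) with hqdef
  have hq : 0 < q := qpos n
  have hhor : ∀ δ : ℝ, 0 < δ → δ ≤ q/2 →
      ∀ a ∈ Fset U n, p.1 ≤ a.1 → a.1 < p.1 + δ → p.2 ≤ a.2 → a.2 < p.2 + δ → a.2 = p.2 := by
    intro δ hδ hδq a haF ha1 ha2 ha3 ha4
    by_contra hne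
    have ha3' : p.2 < a.2 := lt_of_le_of_ne ha3 (Ne.symm hne)
    obtain ⟨b, hbF, hb1, hb2, hb3, hb4⟩ :=
      plane_closure_witness hp (show (0:ℝ) < min δ (a.2 - p.2) by simp [hδ]; linarith)
    have hb4' : b.2 < a.2 := lt_of_lt_of_le hb4 (by
      have := min_le_right δ (a.2 - p.2); linarith)
    have hb4'' : b.2 < p.2 + δ := lt_of_lt_of_le hb4 (by
      have := min_le_left δ (a.2 - p.2); linarith)
    have hb2' : b.1 < p.1 + δ := lt_of_lt_of_le hb2 (by
      have := min_le_left δ (a.2 - p.2); linarith)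
    have : a ∈ Wint U := by
      refine ⟨min (a.2 - b.2) (min (b.2 + q - a.2) (min (b.1 + q - a.1) (a.1 - (b.1 - q)))),
        ?_, fun z hz => hbF.1 ?_⟩
      · simp only [lt_min_iff, sub_pos]
        refine ⟨by linarith, by linarith, by linarith, by linarith⟩
      · obtain ⟨⟨g1, g2⟩, g3, g4⟩ := hz
        have m1 : min (a.2 - b.2) (min (b.2 + q - a.2) (min (b.1 + q - a.1) (a.1 - (b.1 - q))))
            ≤ a.2 - b.2 := min_le_left _ _
        have m2 : min (a.2 - b.2) (min (b.2 + q - a.2) (min (b.1 + q - a.1) (a.1 - (b.1 - q))))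
            ≤ b.2 + q - a.2 := le_trans (min_le_right _ _) (min_le_left _ _)
        have m3 : min (a.2 - b.2) (min (b.2 + q - a.2) (min (b.1 + q - a.1) (a.1 - (b.1 - q))))
            ≤ b.1 + q - a.1 := le_trans (min_le_right _ _) (le_trans (min_le_right _ _) (min_le_left _ _))
        have m4 : min (a.2 - b.2) (min (b.2 + q - a.2) (min (b.1 + q - a.1) (a.1 - (b.1 - q))))
            ≤ a.1 - (b.1 - q) := le_trans (min_le_right _ _) (le_trans (min_le_right _ _) (min_le_right _ _))
        exact ⟨⟨by linarith, by linarith⟩, by linarith, by linarith⟩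
    exact haF.2 this
  obtain ⟨a, haF, ha1, ha2, ha3, ha4⟩ := plane_closure_witness hp (show (0:ℝ) < q/2 by linarith)
  have h2 : a.2 = p.2 := hhor (q/2) (by linarith) (le_refl _) a haF ha1 ha2 ha3 ha4
  apply haF.1
  rw [h2]
  exact ⟨⟨by linarith, by linarith⟩, le_refl _, by linarith⟩

lemma Dset_closed (U : Set (ℝ × ℝ)) (n : ℕ) : IsClosed[sorgenfreyPlaneTop] (Dset U n) := by
  letI := sorgenfreyPlaneTop
  rw [← isOpen_compl_iff, plane_isOpen_iff]
  intro p hpD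
  by_contra hcon
  push_neg at hcon
  set q : ℝ := 1/(n+1) with hqdef
  have hq : 0 < q := qpos n
  have hpD' : p ∉ Dset U n := hpD
  have H : ∀ δ : ℝ, 0 < δ → ∃ a, a ∈ Dset U n ∧
      p.1 ≤ a.1 ∧ a.1 < p.1 + δ ∧ p.2 ≤ a.2 ∧ a.2 < p.2 + δ := by
    intro δ hδ
    obtain ⟨a, ha, haD⟩ := Set.not_subset.1 (hcon δ hδ)
    simp only [Set.mem_compl_iff, not_not] at haD
    obtain ⟨⟨h1, h2⟩, h3, h4⟩ := ha
    exact ⟨a, haD, h1, h2, h3, h4⟩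
  -- Step 1: the open box above-right of p is inside U
  have hOB : ∀ y : ℝ × ℝ, p.1 < y.1 → y.1 < p.1 + q → p.2 < y.2 → y.2 < p.2 + q → y ∈ U := by
    intro y k1 k2 k3 k4
    obtain ⟨a, haD, h1, h2, h3, h4⟩ := H (min (y.1 - p.1) (y.2 - p.2))
      (by simp only [lt_min_iff, sub_pos]; exact ⟨k1, k3⟩)
    have m1 := min_le_left (y.1 - p.1) (y.2 - p.2)
    have m2 := min_le_right (y.1 - p.1) (y.2 - p.2)
    exact haD.1 ⟨⟨by linarith, by linarith⟩, by linarith, by linarith⟩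
  -- Step 2: any member of Dset U n inside the closed box lies on one of the two edges
  have hedge : ∀ a, a ∈ Dset U n → p.1 ≤ a.1 → a.1 < p.1 + q → p.2 ≤ a.2 → a.2 < p.2 + q →
      a.1 = p.1 ∨ a.2 = p.2 := by
    intro a haD h1 h2 h3 h4
    by_contra hne
    push_neg at hne
    have g1 : p.1 < a.1 := lt_of_le_of_ne h1 (Ne.symm hne.1)
    have g2 : p.2 < a.2 := lt_of_le_of_ne h3 (Ne.symm hne.2)
    apply haD.2.1
    refine ⟨min (a.1 - p.1) (min (p.1 + q - a.1) (min (a.2 - p.2) (p.2 + q - a.2))), ?_,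
      fun z hz => ?_⟩
    · simp only [lt_min_iff, sub_pos]
      exact ⟨g1, by linarith, g2, by linarith⟩
    · obtain ⟨⟨j1, j2⟩, j3, j4⟩ := hz
      have m1 : min (a.1 - p.1) (min (p.1 + q - a.1) (min (a.2 - p.2) (p.2 + q - a.2)))
          ≤ a.1 - p.1 := min_le_left _ _
      have m2 : min (a.1 - p.1) (min (p.1 + q - a.1) (min (a.2 - p.2) (p.2 + q - a.2)))
          ≤ p.1 + q - a.1 := le_trans (min_le_right _ _) (min_le_left _ _)
      have m3 : min (a.1 - p.1) (min (p.1 + q - a.1) (min (a.2 - p.2) (p.2 + q - a.2)))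
          ≤ a.2 - p.2 := le_trans (min_le_right _ _) (le_trans (min_le_right _ _) (min_le_left _ _))
      have m4 : min (a.1 - p.1) (min (p.1 + q - a.1) (min (a.2 - p.2) (p.2 + q - a.2)))
          ≤ p.2 + q - a.2 := le_trans (min_le_right _ _) (le_trans (min_le_right _ _) (min_le_right _ _))
      exact hOB z (by linarith) (by linarith) (by linarith) (by linarith)
  -- Step 3: uniqueness of vertical-edge members
  have hK : ∀ s t : ℝ, p.2 < t → t < s → s < p.2 + q →
      (p.1, s) ∈ Dset U n → (p.1, t) ∈ Dset U n → False := by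
    intro s t k1 k2 k3 hs ht
    apply hs.2.1
    refine ⟨min (s - t) (t + q - s), ?_, fun z hz => ?_⟩
    · simp only [lt_min_iff, sub_pos]
      exact ⟨by linarith, by linarith⟩
    · obtain ⟨⟨j1, j2⟩, j3, j4⟩ := hz
      simp only at j1 j2 j3 j4
      have m1 := min_le_left (s - t) (t + q - s)
      have m2 := min_le_right (s - t) (t + q - s)
      apply ht.1
      refine ⟨⟨?_, ?_⟩, ?_, ?_⟩ <;> simp only <;> [exact j1; linarith; linarith; linarith]
  -- Step 3': uniqueness of horizontal-edge members
  have hK' : ∀ s t : ℝ, p.1 < t → t < s → s < p.1 + q →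
      (s, p.2) ∈ Dset U n → (t, p.2) ∈ Dset U n → False := by
    intro s t k1 k2 k3 hs ht
    apply hs.2.2
    refine ⟨min (s - t) (t + q - s), ?_, fun z hz => ?_⟩
    · simp only [lt_min_iff, sub_pos]
      exact ⟨by linarith, by linarith⟩
    · obtain ⟨⟨j1, j2⟩, j3, j4⟩ := hz
      simp only at j1 j2 j3 j4
      have m1 := min_le_left (s - t) (t + q - s)
      have m2 := min_le_right (s - t) (t + q - s)
      apply ht.1
      refine ⟨⟨?_, ?_⟩, ?_, ?_⟩ <;> simp only <;> [linarith; linarith; exact j3; linarith]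
  -- Step 4: the case analysis tree
  obtain ⟨a, haD, a1, a2, a3, a4⟩ := H q hq
  have hane : a ≠ p := fun h => hpD' (h ▸ haD)
  have haeta : (p.1, a.2) ∈ Dset U n ∨ (a.1, p.2) ∈ Dset U n → True := fun _ => trivial
  rcases hedge a haD a1 a2 a3 a4 with hA | hB
  · -- a is on the vertical edge
    have ga2 : p.2 < a.2 := lt_of_le_of_ne a3 fun h => hane (Prod.ext_iff.2 ⟨hA, h.symm⟩)
    have haD' : (p.1, a.2) ∈ Dset U n := by rw [← hA, Prod.mk.eta]; exact haD
    obtain ⟨b, hbD, b1, b2, b3, b4⟩ := H (a.2 - p.2) (by linarith)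
    have hbne : b ≠ p := fun h => hpD' (h ▸ hbD)
    rcases hedge b hbD b1 (by linarith) b3 (by linarith) with hb1 | hb2
    · have gb2 : p.2 < b.2 := lt_of_le_of_ne b3 fun h => hbne (Prod.ext_iff.2 ⟨hb1, h.symm⟩)
      have hbD' : (p.1, b.2) ∈ Dset U n := by rw [← hb1, Prod.mk.eta]; exact hbD
      exact hK a.2 b.2 gb2 (by linarith) a4 haD' hbD'
    · have gb1 : p.1 < b.1 := lt_of_le_of_ne b1 fun h => hbne (Prod.ext_iff.2 ⟨h.symm, hb2⟩)
      have hbD' : (b.1, p.2) ∈ Dset U n := by rw [← hb2, Prod.mk.eta]; exact hbD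
      obtain ⟨c, hcD, c1, c2, c3, c4⟩ := H (min (a.2 - p.2) (b.1 - p.1))
        (by simp only [lt_min_iff, sub_pos]; exact ⟨by linarith, gb1⟩)
      have hcne : c ≠ p := fun h => hpD' (h ▸ hcD)
      have m1 := min_le_left (a.2 - p.2) (b.1 - p.1)
      have m2 := min_le_right (a.2 - p.2) (b.1 - p.1)
      rcases hedge c hcD c1 (by linarith) c3 (by linarith) with hc1 | hc2
      · have gc2 : p.2 < c.2 := lt_of_le_of_ne c3 fun h => hcne (Prod.ext_iff.2 ⟨hc1, h.symm⟩)
        have hcD' : (p.1, c.2) ∈ Dset U n := by rw [← hc1, Prod.mk.eta]; exact hcD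
        exact hK a.2 c.2 gc2 (by linarith) a4 haD' hcD'
      · have gc1 : p.1 < c.1 := lt_of_le_of_ne c1 fun h => hcne (Prod.ext_iff.2 ⟨h.symm, hc2⟩)
        have hcD' : (c.1, p.2) ∈ Dset U n := by rw [← hc2, Prod.mk.eta]; exact hcD
        exact hK' b.1 c.1 gc1 (by linarith) (by linarith) hbD' hcD'
  · -- a is on the horizontal edge
    have ga1 : p.1 < a.1 := lt_of_le_of_ne a1 fun h => hane (Prod.ext_iff.2 ⟨h.symm, hB⟩)
    have haD' : (a.1, p.2) ∈ Dset U n := by rw [← hB, Prod.mk.eta]; exact haD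
    obtain ⟨b, hbD, b1, b2, b3, b4⟩ := H (a.1 - p.1) (by linarith)
    have hbne : b ≠ p := fun h => hpD' (h ▸ hbD)
    rcases hedge b hbD b1 (by linarith) b3 (by linarith) with hb1 | hb2
    · have gb2 : p.2 < b.2 := lt_of_le_of_ne b3 fun h => hbne (Prod.ext_iff.2 ⟨hb1, h.symm⟩)
      have hbD' : (p.1, b.2) ∈ Dset U n := by rw [← hb1, Prod.mk.eta]; exact hbD
      obtain ⟨c, hcD, c1, c2, c3, c4⟩ := H (min (b.2 - p.2) (a.1 - p.1))
        (by simp only [lt_min_iff, sub_pos]; exact ⟨gb2, by linarith⟩)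
      have hcne : c ≠ p := fun h => hpD' (h ▸ hcD)
      have m1 := min_le_left (b.2 - p.2) (a.1 - p.1)
      have m2 := min_le_right (b.2 - p.2) (a.1 - p.1)
      rcases hedge c hcD c1 (by linarith) c3 (by linarith) with hc1 | hc2
      · have gc2 : p.2 < c.2 := lt_of_le_of_ne c3 fun h => hcne (Prod.ext_iff.2 ⟨hc1, h.symm⟩)
        have hcD' : (p.1, c.2) ∈ Dset U n := by rw [← hc1, Prod.mk.eta]; exact hcD
        exact hK b.2 c.2 gc2 (by linarith) (by linarith) hbD' hcD'
      · have gc1 : p.1 < c.1 := lt_of_le_of_ne c1 fun h => hcne (Prod.ext_iff.2 ⟨h.symm, hc2⟩)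
        have hcD' : (c.1, p.2) ∈ Dset U n := by rw [← hc2, Prod.mk.eta]; exact hcD
        exact hK' a.1 c.1 gc1 (by linarith) a2 haD' hcD'
    · have gb1 : p.1 < b.1 := lt_of_le_of_ne b1 fun h => hbne (Prod.ext_iff.2 ⟨h.symm, hb2⟩)
      have hbD' : (b.1, p.2) ∈ Dset U n := by rw [← hb2, Prod.mk.eta]; exact hbD
      exact hK' a.1 b.1 gb1 (by linarith) a2 haD' hbD'

lemma plane_perfect {U : Set (ℝ × ℝ)} (hU : IsOpen[sorgenfreyPlaneTop] U) :
    IsFsigmaIn sorgenfreyPlaneTop U := by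
  letI := sorgenfreyPlaneTop
  have hdecomp : U = Wint U ∪ ((⋃ n, closure (Eset U n)) ∪
      ((⋃ n, closure (Fset U n)) ∪ (⋃ n, Dset U n))) := by
    apply Set.Subset.antisymm
    · intro p hp
      by_cases h1 : p ∈ Wint U
      · exact Or.inl h1
      by_cases h2 : p ∈ Vone U
      · obtain ⟨ε, hε, hsub⟩ := h2
        obtain ⟨n, hn⟩ := exists_nat_one_div_lt hε
        refine Or.inr (Or.inl (Set.mem_iUnion.2 ⟨n, subset_closure ⟨fun z hz => hsub ?_, h1⟩⟩))
        obtain ⟨⟨j1, j2⟩, j3, j4⟩ := hz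
        exact ⟨⟨j1, by linarith⟩, by linarith, by linarith⟩
      by_cases h3 : p ∈ Vtwo U
      · obtain ⟨ε, hε, hsub⟩ := h3
        obtain ⟨n, hn⟩ := exists_nat_one_div_lt hε
        refine Or.inr (Or.inr (Or.inl
          (Set.mem_iUnion.2 ⟨n, subset_closure ⟨fun z hz => hsub ?_, h1⟩⟩)))
        obtain ⟨⟨j1, j2⟩, j3, j4⟩ := hz
        exact ⟨⟨by linarith, by linarith⟩, j3, by linarith⟩
      · obtain ⟨ε, hε, hsub⟩ := plane_isOpen_iff.1 hU p hp
        obtain ⟨n, hn⟩ := exists_nat_one_div_lt hε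
        refine Or.inr (Or.inr (Or.inr (Set.mem_iUnion.2 ⟨n, ⟨fun z hz => hsub ?_, h2, h3⟩⟩)))
        obtain ⟨⟨j1, j2⟩, j3, j4⟩ := hz
        exact ⟨⟨j1, by linarith⟩, j3, by linarith⟩
    · rintro p (hp | hp | hp | hp)
      · exact Wint_subset U hp
      · obtain ⟨n, hn⟩ := Set.mem_iUnion.1 hp
        exact Eset_closure_subset U n hn
      · obtain ⟨n, hn⟩ := Set.mem_iUnion.1 hp
        exact Fset_closure_subset U n hn
      · obtain ⟨n, hn⟩ := Set.mem_iUnion.1 hp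
        exact hn.1 ⟨⟨le_refl _, by linarith [qpos n]⟩, le_refl _, by linarith [qpos n]⟩
  rw [hdecomp]
  refine fsigma_union (euclid_open_fsigma (Wint_open U)) (fsigma_union
    ⟨fun n => closure (Eset U n), fun n => isClosed_closure, rfl⟩ (fsigma_union
    ⟨fun n => closure (Fset U n), fun n => isClosed_closure, rfl⟩
    ⟨fun n => Dset U n, Dset_closed U, rfl⟩))

/-- Every subset of the antidiagonal is closed in the Sorgenfrey plane. -/

lemma antidiag_subset_closed {S : Set (ℝ × ℝ)} (hS : ∀ p ∈ S, p.1 + p.2 = 0) :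
    IsClosed[sorgenfreyPlaneTop] S := by
  letI := sorgenfreyPlaneTop
  rw [← isOpen_compl_iff, plane_isOpen_iff]
  intro p hp
  by_cases hA : p.1 + p.2 = 0
  · refine ⟨1, one_pos, fun z hz hzS => ?_⟩
    obtain ⟨⟨j1, j2⟩, j3, j4⟩ := hz
    have hz0 := hS z hzS
    have hz1 : z.1 = p.1 := by linarith
    have hz2 : z.2 = p.2 := by linarith
    exact hp (by rwa [show z = p from Prod.ext_iff.2 ⟨hz1, hz2⟩] at hzS)
  · rcases lt_or_gt_of_ne hA with hlt | hgt
    · refine ⟨-(p.1 + p.2)/2, by linarith, fun z hz hzS => ?_⟩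
      obtain ⟨⟨j1, j2⟩, j3, j4⟩ := hz
      have := hS z hzS
      linarith
    · refine ⟨1, one_pos, fun z hz hzS => ?_⟩
      obtain ⟨⟨j1, j2⟩, j3, j4⟩ := hz
      have := hS z hzS
      linarith

/-- The Sorgenfrey plane does not have the OB property: cardinality argument. -/

lemma no_OB : ¬ @OBProperty (ℝ × ℝ) sorgenfreyPlaneTop := by
  rintro ⟨t', hle, hmetr, hsep, hFσ⟩
  -- t' is second countable
  have hsc : @SecondCountableTopology (ℝ × ℝ) t' := by
    letI := t'
    haveI := hmetr
    haveI := hsep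
    letI m : MetricSpace (ℝ × ℝ) := TopologicalSpace.metrizableSpaceMetric (ℝ × ℝ)
    have e : m.toUniformSpace.toTopologicalSpace = t' := rfl
    rw [← e]
    exact @UniformSpace.secondCountable_of_separable (ℝ × ℝ) m.toUniformSpace
      (@EMetric.instIsCountablyGeneratedUniformity (ℝ × ℝ) m.toPseudoEMetricSpace) (e ▸ hsep)
  obtain ⟨b, hbc, hbne, hbasis⟩ := @TopologicalSpace.exists_countable_basis (ℝ × ℝ) t' hsc
  -- every image of a set of reals on the antidiagonal is Fσ in t'
  have key : ∀ T : Set ℝ, IsFsigmaIn t' ((fun x : ℝ => (x, -x)) '' T) := by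
    intro T
    apply hFσ
    refine ⟨Set.univ, _, ?_, antidiag_subset_closed ?_, (Set.univ_inter _).symm⟩
    · letI := sorgenfreyPlaneTop; exact isOpen_univ
    · rintro p ⟨x, _, rfl⟩; simp
  choose C hC using key
  -- encode closed sets by the basis elements inside their complement
  set code : Set (ℝ × ℝ) → Set ↥b := fun c => {s : ↥b | (s : Set (ℝ × ℝ)) ⊆ cᶜ} with hcode
  have hdecode : ∀ c : Set (ℝ × ℝ), IsClosed[t'] c → cᶜ = ⋃₀ (Subtype.val '' code c) := by
    intro c hc
    have hopen : IsOpen[t'] cᶜ := by letI := t'; exact hc.isOpen_compl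
    have himg : Subtype.val '' code c = {s | s ∈ b ∧ s ⊆ cᶜ} := by
      apply Set.Subset.antisymm
      · rintro s ⟨⟨s', hs'⟩, h1, rfl⟩
        exact ⟨hs', h1⟩
      · rintro s ⟨hs1, hs2⟩
        exact ⟨⟨s, hs1⟩, hs2, rfl⟩
    rw [himg]
    exact hbasis.open_eq_sUnion' hopen
  have hinj : Function.Injective (fun T : Set ℝ => fun n : ℕ => code (C T n)) := by
    intro T T' h
    have himg : (fun x : ℝ => (x, -x)) '' T = (fun x : ℝ => (x, -x)) '' T' := by
      rw [(hC T).2, (hC T').2]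
      apply Set.iUnion_congr
      intro n
      have h1 : code (C T n) = code (C T' n) := congrFun h n
      have : (C T n)ᶜ = (C T' n)ᶜ := by
        rw [hdecode _ ((hC T).1 n), hdecode _ ((hC T').1 n), h1]
      exact compl_injective this
    exact (Set.image_injective.2 fun x y hxy => (Prod.ext_iff.1 hxy).1) himg
  have hcard := Cardinal.mk_le_of_injective hinj
  have h1 : Cardinal.mk (ℕ → Set ↥b) ≤ Cardinal.continuum := by
    rw [← Cardinal.power_def]
    calc Cardinal.mk (Set ↥b) ^ Cardinal.mk ℕ ≤ (2 ^ Cardinal.aleph0) ^ Cardinal.aleph0 := by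
          rw [Cardinal.mk_nat]
          apply Cardinal.power_le_power_right
          rw [Cardinal.mk_set]
          apply Cardinal.power_le_power_left two_ne_zero
          haveI : Countable ↥b := hbc.to_subtype
          exact Cardinal.mk_le_aleph0
      _ = 2 ^ (Cardinal.aleph0 * Cardinal.aleph0) := Cardinal.power_mul.symm
      _ = Cardinal.continuum := by rw [Cardinal.aleph0_mul_aleph0, Cardinal.two_power_aleph0]
  have h2 : Cardinal.mk (Set ℝ) = 2 ^ Cardinal.continuum := by
    rw [Cardinal.mk_set, Cardinal.mk_real]
  exact (Cardinal.cantor Cardinal.continuum).not_ge ((h2 ▸ hcard).trans h1)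


/-- The Sorgenfrey plane is perfect (every open set is F_σ) but does not
possess the OB-property. -/
theorem statement4 :
    (∀ U : Set (ℝ × ℝ), IsOpen[sorgenfreyPlaneTop] U → IsFsigmaIn sorgenfreyPlaneTop U) ∧
    ¬ @OBProperty (ℝ × ℝ) sorgenfreyPlaneTop :=
  ⟨fun _ hU => plane_perfect hU, no_OB⟩

end Selectors
end

section
/- Let X be an infinite Hausdorff topological space and let 𝒰 be an open ω-cover of X. Then the family S(𝒰) = {f_{U,g} + g : U ∈ 𝒰, g ∈ USC*_p(X)} is contained in USC*_p(X) and is upper dense in USC*_p(X). -/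
open Set Filter Topology

namespace Selectors

variable {X : Type*}

section Aux

variable {X : Type*} [TopologicalSpace X]

/-- If `U` is open, `g` is USC and `c > 0`, then `Uᶜ.indicator c + g` is USC. -/
lemma aux_indicator_add_usc {U : Set X} (hU : IsOpen U) {g : X → ℝ}
    (hg : ∀ a, IsOpen {x | g x < a}) {c : ℝ} (hc : 0 < c) (a : ℝ) :
    IsOpen {x | Uᶜ.indicator (fun _ => c) x + g x < a} := by
  have hset : {x | Uᶜ.indicator (fun _ => c) x + g x < a}
      = (U ∩ {x | g x < a}) ∪ {x | g x < a - c} := by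
    ext x
    by_cases hx : x ∈ U
    · have hx' : x ∉ Uᶜ := by simpa using hx
      simp only [Set.mem_setOf_eq, Set.mem_union, Set.mem_inter_iff,
        Set.indicator_of_notMem hx', zero_add]
      constructor
      · intro h; exact Or.inl ⟨hx, h⟩
      · rintro (⟨-, h⟩ | h) <;> linarith
    · have hx' : x ∈ Uᶜ := by simpa using hx
      simp only [Set.mem_setOf_eq, Set.mem_union, Set.mem_inter_iff,
        Set.indicator_of_mem hx']
      constructor
      · intro h; exact Or.inr (by linarith)
      · rintro (⟨h, -⟩ | h)
        · exact absurd h hx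
        · linarith
  rw [hset]
  exact (hU.inter (hg a)).union (hg (a - c))

lemma indicator_add_mem {U : Set X} (hU : IsOpen U) {c : ℝ} (hc : 0 < c)
    {s : X → ℝ} (hso : ∀ a, IsOpen {x | s x < a}) (hsb : ∃ M, ∀ x, |s x| ≤ M) :
    (Uᶜ.indicator (fun _ => c) + s) ∈ USCb X := by
  obtain ⟨M, hM⟩ := hsb
  refine ⟨fun a => ?_, c + M, fun x => ?_⟩
  · simpa [Pi.add_apply] using aux_indicator_add_usc hU hso hc a
  · have h1 : |Uᶜ.indicator (fun _ => c) x| ≤ c := by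
      by_cases hx : x ∈ Uᶜ
      · simp [Set.indicator_of_mem hx, abs_of_pos hc]
      · simp [Set.indicator_of_notMem hx]; linarith
    calc |(Uᶜ.indicator (fun _ => c) + s) x|
        ≤ |Uᶜ.indicator (fun _ => c) x| + |s x| := abs_add_le _ _
      _ ≤ c + M := add_le_add h1 (hM x)

lemma fU_add_mem {U : Set X} (hU : IsOpen U) {g : X → ℝ} (hg : g ∈ USCb X) :
    fU U g + g ∈ USCb X := by
  obtain ⟨hgo, M, hM⟩ := hg
  have hc : 0 < 1 + ⨆ y, |g y| := by
    have h0 : 0 ≤ ⨆ y, |g y| := Real.iSup_nonneg fun y => abs_nonneg _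
    linarith
  exact indicator_add_mem hU hc hgo ⟨M, hM⟩

end Aux

/-- If 𝒰 is an open ω-cover of an infinite Hausdorff space X, then
S(𝒰) = {f_{U,g} + g : U ∈ 𝒰, g ∈ USC*_p(X)} ⊆ USC*_p(X) is upper dense in USC*_p(X). -/
theorem statement5 {X : Type*} [TopologicalSpace X] [T2Space X] [Infinite X]
    (𝒰 : Set (Set X)) (h𝒰 : 𝒰 ∈ OpenKindCovers X CoverKind.omega) :
    SU 𝒰 ⊆ USCb X ∧ UpperDenseIn (SU 𝒰) (USCb X) := by
  have hsub : SU 𝒰 ⊆ USCb X := by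
    rintro h ⟨U, hU, g, hg, rfl⟩
    exact fU_add_mem (h𝒰.1 U hU) hg
  refine ⟨hsub, hsub, ?_⟩
  intro f hf t ht
  obtain ⟨htH, hft⟩ := ht
  rw [mem_closure_iff_nhds]
  intro N hN
  rw [nhds_pi, Filter.mem_pi] at hN
  obtain ⟨I, hIfin, V, hV, hVN⟩ := hN
  obtain ⟨U, hU𝒰, hIU⟩ := h𝒰.2.2.2 I hIfin
  obtain ⟨hfo, Mf, hMf⟩ := hf
  obtain ⟨hto, Mt, hMt⟩ := htH
  set s : X → ℝ := I.indicator (fun x => t x - f x) with hs_def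
  have hs0 : ∀ x, 0 ≤ s x :=
    fun x => Set.indicator_nonneg (fun y _ => sub_nonneg.2 (hft y)) x
  have hsb : ∀ x, |s x| ≤ Mt + Mf := by
    intro x
    by_cases hx : x ∈ I
    · rw [hs_def, Set.indicator_of_mem hx]
      calc |t x - f x| ≤ |t x| + |f x| := abs_sub _ _
        _ ≤ Mt + Mf := add_le_add (hMt x) (hMf x)
    · rw [hs_def, Set.indicator_of_notMem hx]
      simp only [abs_zero]
      linarith [hMt x, hMf x, abs_nonneg (t x), abs_nonneg (f x)]
  have hsUSC : ∀ a, IsOpen {x | s x < a} := by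
    intro a
    rcases le_or_gt a 0 with ha | ha
    · have hempty : {x | s x < a} = ∅ := by
        ext x
        simp only [Set.mem_setOf_eq, Set.mem_empty_iff_false, iff_false, not_lt]
        linarith [hs0 x]
      rw [hempty]; exact isOpen_empty
    · have hfin : ({x | x ∈ I ∧ a ≤ s x}).Finite := hIfin.subset fun x hx => hx.1
      have hset : {x | s x < a} = {x | x ∈ I ∧ a ≤ s x}ᶜ := by
        ext x
        simp only [Set.mem_setOf_eq, Set.mem_compl_iff, not_and, not_le]
        constructor
        · intro h _; exact h
        · intro h
          by_cases hx : x ∈ I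
          · exact h hx
          · rw [hs_def, Set.indicator_of_notMem hx]; exact ha
      rw [hset]; exact hfin.isClosed.isOpen_compl
  set g : X → ℝ := f + s with hg_def
  have hgo : ∀ a, IsOpen {x | g x < a} := by
    intro a
    have hfin : ({x | x ∈ I ∧ a ≤ f x + s x}).Finite := hIfin.subset fun x hx => hx.1
    have hset : {x | g x < a} = {x | f x < a} ∩ {x | x ∈ I ∧ a ≤ f x + s x}ᶜ := by
      ext x
      simp only [hg_def, Pi.add_apply, Set.mem_setOf_eq, Set.mem_inter_iff,
        Set.mem_compl_iff, not_and, not_le]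
      constructor
      · intro h
        exact ⟨by linarith [hs0 x], fun _ => h⟩
      · rintro ⟨h1, h2⟩
        by_cases hx : x ∈ I
        · exact h2 hx
        · have hzero : s x = 0 := by rw [hs_def]; exact Set.indicator_of_notMem hx _
          linarith
    rw [hset]
    exact (hfo a).inter hfin.isClosed.isOpen_compl
  have hgb : ∀ x, |g x| ≤ Mf + (Mt + Mf) := by
    intro x
    calc |g x| = |f x + s x| := rfl
      _ ≤ |f x| + |s x| := abs_add_le _ _
      _ ≤ Mf + (Mt + Mf) := add_le_add (hMf x) (hsb x)
  have hgUSCb : g ∈ USCb X := ⟨hgo, Mf + (Mt + Mf), hgb⟩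
  set c : ℝ := 1 + ⨆ y, |g y| with hc_def
  have hc : 0 < c := by
    have h0 : 0 ≤ ⨆ y, |g y| := Real.iSup_nonneg fun y => abs_nonneg _
    rw [hc_def]; linarith
  set h : X → ℝ := fU U g + g with hh_def
  have hmem : h ∈ SU 𝒰 := ⟨U, hU𝒰, g, hgUSCb, hh_def⟩
  have hUopen : IsOpen U := h𝒰.1 U hU𝒰
  have hfU_eq : ∀ x, fU U g x = Uᶜ.indicator (fun _ => c) x := fun x => rfl
  have hfU_nonneg : ∀ x, 0 ≤ fU U g x := by
    intro x
    rw [hfU_eq x]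
    exact Set.indicator_nonneg (fun _ _ => le_of_lt hc) x
  have hfleh : f ≤ h := by
    intro x
    have hx : h x = fU U g x + (f x + s x) := rfl
    rw [hx]
    linarith [hfU_nonneg x, hs0 x]
  have hsub2 : h - f = Uᶜ.indicator (fun _ => c) + s := by
    funext x
    show fU U g x + (f x + s x) - f x = Uᶜ.indicator (fun _ => c) x + s x
    rw [hfU_eq x]; ring
  have hdiff : h - f ∈ USCb X := by
    rw [hsub2]
    exact indicator_add_mem hUopen hc hsUSC ⟨Mt + Mf, hsb⟩
  refine ⟨h, hVN ?_, hmem, hfleh, hdiff⟩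
  rw [Set.mem_pi]
  intro x hx
  have hxU : x ∈ U := hIU hx
  have h1 : fU U g x = 0 := by
    rw [hfU_eq x]
    exact Set.indicator_of_notMem (by simpa using hxU) _
  have h2 : s x = t x - f x := by rw [hs_def]; exact Set.indicator_of_mem hx _
  have hxt : h x = t x := by
    show fU U g x + (f x + s x) = t x
    rw [h1, h2]; ring
  rw [hxt]
  exact mem_of_mem_nhds (hV x)

end Selectors
end

section
/- Let X be an infinite Hausdorff topological space and let 𝒰 be an open γ-cover of X. Then the family S(𝒰) = {f_{U,g} + g : U ∈ 𝒰, g ∈ USC*_p(X)} is contained in USC*_p(X) and is upper sequentially dense in USC*_p(X). -/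
open Set Filter Topology

namespace Selectors

variable {X : Type*}

lemma isUSCb_indicator {X : Type*} [TopologicalSpace X] {U : Set X} (hU : IsOpen U)
    {c : ℝ} (hc : 0 ≤ c) : IsUSCb (Uᶜ.indicator fun _ => c) := by
  constructor
  · intro a
    rcases lt_or_ge c a with hca | hca
    · convert isOpen_univ
      ext x
      simp only [Set.mem_setOf_eq, Set.mem_univ, iff_true]
      by_cases hx : x ∈ Uᶜ
      · rw [Set.indicator_of_mem hx]; exact hca
      · rw [Set.indicator_of_notMem hx]; exact lt_of_le_of_lt hc hca
    rcases lt_or_ge 0 a with h0 | h0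
    · convert hU
      ext x
      simp only [Set.mem_setOf_eq, Set.indicator_apply]
      by_cases hx : x ∈ U
      · simp [hx, h0]
      · simp [hx, not_lt.2 hca]
    · convert isOpen_empty
      ext x
      simp only [Set.mem_setOf_eq, Set.mem_empty_iff_false, iff_false, not_lt,
        ]
      by_cases hx : x ∈ Uᶜ
      · rw [Set.indicator_of_mem hx]; exact h0.trans hc
      · rw [Set.indicator_of_notMem hx]; exact h0
  · refine ⟨c, fun x => ?_⟩
    by_cases hx : x ∈ Uᶜ
    · rw [Set.indicator_of_mem hx, abs_of_nonneg hc]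
    · rw [Set.indicator_of_notMem hx]; simpa using hc

lemma IsUSCb.add' {X : Type*} [TopologicalSpace X] {f g : X → ℝ}
    (hf : IsUSCb f) (hg : IsUSCb g) : IsUSCb (f + g) := by
  obtain ⟨hf1, Mf, hf2⟩ := hf
  obtain ⟨hg1, Mg, hg2⟩ := hg
  refine ⟨?_, Mf + Mg, fun x => (abs_add_le _ _).trans (add_le_add (hf2 x) (hg2 x))⟩
  have Hf : UpperSemicontinuous f := upperSemicontinuous_iff_isOpen_preimage.2 hf1
  have Hg : UpperSemicontinuous g := upperSemicontinuous_iff_isOpen_preimage.2 hg1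
  exact fun a => upperSemicontinuous_iff_isOpen_preimage.1 (Hf.add Hg) a

/-- If 𝒰 is an open γ-cover of an infinite Hausdorff space X, then
S(𝒰) = {f_{U,g} + g : U ∈ 𝒰, g ∈ USC*_p(X)} ⊆ USC*_p(X) is upper sequentially dense
in USC*_p(X). -/
theorem statement6 {X : Type*} [TopologicalSpace X] [T2Space X] [Infinite X]
    (𝒰 : Set (Set X)) (h𝒰 : 𝒰 ∈ OpenKindCovers X CoverKind.gamma) :
    SU 𝒰 ⊆ USCb X ∧ UpperSeqDenseIn (SU 𝒰) (USCb X) := by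
  obtain ⟨hopen, hcov, hinf, hgam⟩ := h𝒰
  have hcnn : ∀ g : X → ℝ, (0:ℝ) ≤ 1 + ⨆ y, |g y| := by
    intro g
    have := Real.iSup_nonneg (fun y => abs_nonneg (g y))
    linarith
  have key : ∀ U ∈ 𝒰, ∀ g : X → ℝ, IsUSCb (fU U g) := by
    intro U hU g
    exact isUSCb_indicator (hopen U hU) (hcnn g)
  have hsub : SU 𝒰 ⊆ USCb X := by
    rintro f ⟨U, hU, g, hg, rfl⟩
    exact (key U hU g).add' hg
  refine ⟨hsub, hsub, ?_⟩
  intro f hf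
  have e : ℕ ↪ 𝒰 := hinf.natEmbedding
  refine ⟨fun n => fU (e n) f + f, fun n => ⟨⟨e n, (e n).2, f, hf, rfl⟩, ?_, ?_⟩, ?_⟩
  · intro x
    have h0 : (0:ℝ) ≤ fU (↑(e n)) f x := Set.indicator_nonneg (fun _ _ => hcnn f) x
    simp only [Pi.add_apply]
    linarith
  · have : (fU (↑(e n)) f + f) - f = fU (↑(e n)) f := by ring
    rw [this]
    exact key _ (e n).2 f
  · rw [tendsto_pi_nhds]
    intro x
    have hfin : {n : ℕ | x ∉ (e n : Set X)}.Finite := by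
      have heq : {n : ℕ | x ∉ (e n : Set X)}
          = (fun n => ((e n : Set X))) ⁻¹' {U ∈ 𝒰 | x ∉ U} := by
        ext n
        simp [(e n).2]
      rw [heq]
      exact (hgam x).preimage (fun a _ b _ h => e.injective (Subtype.coe_injective h))
    have hev : ∀ᶠ n in atTop, x ∈ (e n : Set X) := by
      have := hfin.eventually_cofinite_notMem
      rw [Nat.cofinite_eq_atTop] at this
      filter_upwards [this] with n hn
      simpa using hn
    have hcongr : (fun _ : ℕ => f x) =ᶠ[atTop] fun n => (fU (↑(e n)) f + f) x := by
      filter_upwards [hev] with n hn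
      simp [fU, Set.indicator_apply, hn]
    exact Filter.Tendsto.congr' hcongr tendsto_const_nhds

end Selectors
end

section
/- Let Φ = Ω or Φ = Γ and let X be an infinite Hausdorff topological space. The following are equivalent: (a) USC*_p(X) satisfies the selection principle S₁(Φ̃↑, 𝒟), i.e., S₁(Φ̃↑(USC*_p(X)), 𝒟(USC*_p(X))); (b) USC*_p(X) is separable and X is an S₁(Φ,Ω)-space; (c) USC*_p(X) is separable and satisfies S₁(Φ_h,Ω_h) for every h ∈ USC*_p(X); (d) USC*_p(X) is separable and satisfies S₁(Φ̃↑,Ω_h) for every h ∈ USC*_p(X). -/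
open Set Filter Topology

namespace Selectors

variable {X : Type*}

/-! ### Auxiliary lemmas -/

open scoped Classical

section Aux

variable {X : Type*} [TopologicalSpace X]

lemma usc_const (c : ℝ) : (fun _ : X => c) ∈ USCb X := by
  refine ⟨fun a => ?_, ⟨|c|, fun x => le_refl _⟩⟩
  by_cases h : c < a
  · convert isOpen_univ using 1; ext x; simp [h]
  · convert isOpen_empty using 1; ext x; simp [h]

lemma zero_mem_USCb : (0 : X → ℝ) ∈ USCb X := usc_const 0

lemma usc_add {f g : X → ℝ} (hf : f ∈ USCb X) (hg : g ∈ USCb X) : f + g ∈ USCb X := by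
  obtain ⟨hf1, M, hM⟩ := hf
  obtain ⟨hg1, N, hN⟩ := hg
  refine ⟨fun a => ?_, ⟨M + N, fun x => ?_⟩⟩
  · have : {x | (f + g) x < a} = ⋃ q : ℚ, ({x | f x < (q:ℝ)} ∩ {x | g x < a - q}) := by
      ext x
      simp only [Set.mem_setOf_eq, Set.mem_iUnion, Set.mem_inter_iff, Pi.add_apply]
      constructor
      · intro h
        obtain ⟨q, hq1, hq2⟩ := exists_rat_btwn (show f x < a - g x by linarith)
        exact ⟨q, hq1, by linarith⟩
      · rintro ⟨q, h1, h2⟩; linarith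
    rw [this]
    exact isOpen_iUnion fun q => (hf1 _).inter (hg1 _)
  · calc |(f + g) x| ≤ |f x| + |g x| := abs_add_le _ _
      _ ≤ M + N := add_le_add (hM x) (hN x)

noncomputable def bump (K : Finset X) (c : X → ℝ) : X → ℝ :=
  fun x => if x ∈ K then c x else 0

omit [TopologicalSpace X] in
lemma bump_nonneg {K : Finset X} {c : X → ℝ} (hc : ∀ x ∈ K, 0 ≤ c x) (x : X) :
    0 ≤ bump K c x := by
  unfold bump; split
  · exact hc x ‹_›
  · exact le_refl _

omit [TopologicalSpace X] in
lemma bump_apply_mem {K : Finset X} {c : X → ℝ} {x : X} (hx : x ∈ K) :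
    bump K c x = c x := by simp [bump, hx]

omit [TopologicalSpace X] in
lemma bump_apply_not_mem {K : Finset X} {c : X → ℝ} {x : X} (hx : x ∉ K) :
    bump K c x = 0 := by simp [bump, hx]

lemma usc_bump [T1Space X] (K : Finset X) (c : X → ℝ) (hc : ∀ x ∈ K, 0 ≤ c x) :
    bump K c ∈ USCb X := by
  constructor
  · intro a
    rcases le_or_gt a 0 with ha | ha
    · convert isOpen_empty using 1
      ext x; simp only [Set.mem_setOf_eq, Set.mem_empty_iff_false, iff_false, not_lt]
      exact le_trans ha (bump_nonneg hc x)
    · have : {x | bump K c x < a} = ({x ∈ (K : Set X) | a ≤ c x})ᶜ := by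
        ext x
        simp only [Set.mem_setOf_eq, Set.mem_compl_iff, Finset.mem_coe, not_and, not_le]
        unfold bump
        constructor
        · intro h hx; simpa [hx] using h
        · intro h; by_cases hx : x ∈ K <;> simp [hx, ha, h]
      rw [this]
      exact (Set.Finite.isClosed ((K.finite_toSet).subset (Set.sep_subset _ _))).isOpen_compl
  · refine ⟨∑ y ∈ K, |c y|, fun x => ?_⟩
    unfold bump
    split
    · exact Finset.single_le_sum (f := fun y => |c y|) (fun y _ => abs_nonneg _) ‹_›
    · simp only [abs_zero]
      exact Finset.sum_nonneg fun y _ => abs_nonneg _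

lemma usc_indicator_closed [T1Space X] {C : Set X} (hC : IsClosed C) {c : ℝ} (hc : 0 ≤ c) :
    C.indicator (fun _ => c) ∈ USCb X := by
  constructor
  · intro a
    rcases le_or_gt a 0 with ha | ha
    · convert isOpen_empty using 1
      ext x; simp only [Set.mem_setOf_eq, Set.mem_empty_iff_false, iff_false, not_lt]
      exact le_trans ha (Set.indicator_nonneg (fun _ _ => hc) x)
    · rcases lt_or_ge c a with hca | hca
      · convert isOpen_univ using 1
        ext x; simp only [Set.mem_setOf_eq, Set.mem_univ, iff_true]
        rcases Set.indicator_eq_zero_or_self C (fun _ => c) x with h | h <;> rw [h] <;> linarith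
      · have : {x | C.indicator (fun _ => c) x < a} = Cᶜ := by
          ext x
          by_cases hx : x ∈ C <;> simp [hx, ha, not_lt.2 hca]
        rw [this]
        exact hC.isOpen_compl
  · exact ⟨|c|, fun x => by
      rcases Set.indicator_eq_zero_or_self C (fun _ => c) x with h | h <;> rw [h] <;> simp⟩

omit [TopologicalSpace X] in
lemma memClosurePiR {S : Set (X → ℝ)} {h : X → ℝ} :
    h ∈ closure S ↔ ∀ (K : Finset X) (ε : ℝ), 0 < ε → ∃ f ∈ S, ∀ x ∈ K, |f x - h x| < ε := by
  constructor
  · intro hcl K ε hε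
    have hopen : IsOpen {g : X → ℝ | ∀ x ∈ K, |g x - h x| < ε} := by
      have : {g : X → ℝ | ∀ x ∈ K, |g x - h x| < ε} =
          ⋂ x ∈ K, (fun g : X → ℝ => g x) ⁻¹' (Metric.ball (h x) ε) := by
        ext g; simp [Real.dist_eq]
      rw [this]
      exact isOpen_biInter_finset fun x _ =>
        (continuous_apply x).isOpen_preimage _ Metric.isOpen_ball
    have hmem : h ∈ {g : X → ℝ | ∀ x ∈ K, |g x - h x| < ε} := by
      intro x _; simpa using hε
    obtain ⟨f, hf1, hf2⟩ := mem_closure_iff.1 hcl _ hopen hmem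
    exact ⟨f, hf2, hf1⟩
  · intro H
    rw [mem_closure_iff]
    intro o ho hho
    obtain ⟨I, u, hu, hsub⟩ := isOpen_pi_iff.1 ho h hho
    have hball : ∀ x ∈ I, ∃ ε : ℝ, 0 < ε ∧ Metric.ball (h x) ε ⊆ u x := by
      intro x hx
      exact Metric.isOpen_iff.1 (hu x hx).1 _ (hu x hx).2
    choose εf hεf using hball
    rcases I.eq_empty_or_nonempty with hI | hI
    · obtain ⟨f, hf, _⟩ := H ∅ 1 one_pos
      refine ⟨f, hsub ?_, hf⟩
      intro x hx; simp [hI] at hx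
    · have hI' : I.attach.Nonempty := by simpa using hI
      set ε := I.attach.inf' hI' (fun x => εf x.1 x.2) with hεdef
      have hεpos : 0 < ε := by
        rw [Finset.lt_inf'_iff hI']
        intro x _; exact (hεf x.1 x.2).1
      obtain ⟨f, hf, hff⟩ := H I ε hεpos
      refine ⟨f, hsub ?_, hf⟩
      intro x hx
      apply (hεf x hx).2
      rw [Metric.mem_ball, Real.dist_eq]
      calc |f x - h x| < ε := hff x hx
        _ ≤ εf x hx := Finset.inf'_le _ (Finset.mem_attach _ ⟨x, hx⟩)

end Aux

section Main

variable {X : Type*} [TopologicalSpace X] [T2Space X] [Infinite X]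


lemma upTilde_sub {k : CoverKind} {F H : Set (X → ℝ)} (h : F ∈ upTilde k H) : F ⊆ H := by
  cases k
  · exact h.1
  · exact h.1
  · exact h.1

lemma add_sub_self_fun (f s : X → ℝ) : f + s - f = s := by
  funext x; simp [Pi.sub_apply, Pi.add_apply]

lemma le_add_of_nonneg_fun {f s : X → ℝ} (hs : ∀ x, 0 ≤ s x) : f ≤ f + s := by
  intro x; simp only [Pi.add_apply]; linarith [hs x]

lemma mem_upTilde_self {Φ : CoverKind} (hΦ : Φ = CoverKind.omega ∨ Φ = CoverKind.gamma) :
    USCb X ∈ upTilde Φ (USCb X) := by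
  rcases hΦ with rfl | rfl
  · refine ⟨Set.Subset.rfl, fun f hf => ?_⟩
    rintro g0 ⟨hg0H, hfg0⟩
    rw [memClosurePiR]
    intro K ε hε
    have hb : ∀ x ∈ K, 0 ≤ g0 x - f x := fun x _ => by linarith [hfg0 x]
    refine ⟨f + bump K (fun x => g0 x - f x),
      ⟨usc_add hf (usc_bump K _ hb), le_add_of_nonneg_fun (bump_nonneg hb), ?_⟩, ?_⟩
    · rw [add_sub_self_fun]; exact usc_bump K _ hb
    · intro x hx
      simp only [Pi.add_apply, bump_apply_mem hx]
      simpa using hε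
  · refine ⟨Set.Subset.rfl, fun f hf => ⟨fun n => f + (fun _ => (1:ℝ)/(n+1)), fun n => ?_, ?_⟩⟩
    · refine ⟨usc_add hf (usc_const _), le_add_of_nonneg_fun fun x => by positivity, ?_⟩
      rw [add_sub_self_fun]; exact usc_const _
    · rw [tendsto_pi_nhds]
      intro x
      simpa using tendsto_const_nhds.add (tendsto_one_div_add_atTop_nhds_zero_nat (𝕜 := ℝ))

lemma iSup_abs_nonneg (g : X → ℝ) : 0 ≤ ⨆ y, |g y| :=
  Real.iSup_nonneg fun y => abs_nonneg _

lemma fU_nonneg (U : Set X) (g : X → ℝ) (x : X) : 0 ≤ fU U g x :=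
  Set.indicator_nonneg (fun _ _ => by linarith [iSup_abs_nonneg g]) x

lemma fU_mem_USCb {U : Set X} (hU : IsOpen U) (g : X → ℝ) : fU U g ∈ USCb X :=
  usc_indicator_closed (isClosed_compl_iff.2 hU) (by linarith [iSup_abs_nonneg g])

lemma fU_apply_of_mem {U : Set X} {x : X} (hx : x ∈ U) (g : X → ℝ) : fU U g x = 0 :=
  Set.indicator_of_notMem (by simpa using hx) _

lemma fU_add_self_ge_one {U : Set X} {x : X} (hx : x ∉ U) {g : X → ℝ} (hg : g ∈ USCb X) :
    1 ≤ fU U g x + g x := by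
  obtain ⟨-, M, hM⟩ := hg
  have h1 : fU U g x = 1 + ⨆ y, |g y| := Set.indicator_of_mem (by simpa using hx) _
  have h2 : |g x| ≤ ⨆ y, |g y| := by
    apply le_ciSup (f := fun y => |g y|)
    exact ⟨M, by rintro - ⟨y, rfl⟩; exact hM y⟩
  have h3 : -(g x) ≤ |g x| := neg_le_abs _
  linarith


lemma omegaCover_gen (h : X → ℝ) (G : Set (X → ℝ)) (δ : ℝ)
    (hopen : ∀ g ∈ G, ∀ a : ℝ, IsOpen {x | g x - h x < a})
    (hnu : ∀ g ∈ G, ∃ x, δ ≤ g x - h x)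
    (hfin : ∀ K : Finset X, ∃ g ∈ G, ∀ x ∈ K, g x - h x < δ) :
    {V | ∃ g ∈ G, V = {x | g x - h x < δ}} ∈ OpenKindCovers X CoverKind.omega := by
  have hfs : ∀ F : Set X, F.Finite →
      ∃ V ∈ {V | ∃ g ∈ G, V = {x | g x - h x < δ}}, F ⊆ V := by
    intro F hF
    obtain ⟨g, hg, hgK⟩ := hfin hF.toFinset
    exact ⟨_, ⟨g, hg, rfl⟩, fun x hx => hgK x (hF.mem_toFinset.2 hx)⟩
  refine ⟨?_, ?_, ?_, hfs⟩
  · rintro V ⟨g, hg, rfl⟩; exact hopen g hg δ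
  · intro x
    obtain ⟨V, hV, hxV⟩ := hfs {x} (Set.finite_singleton x)
    exact ⟨V, hV, hxV rfl⟩
  · rintro ⟨g, hg, huniv⟩
    obtain ⟨x, hx⟩ := hnu g hg
    have : x ∈ {x | g x - h x < δ} := huniv ▸ Set.mem_univ x
    exact absurd this (by simpa using hx)

lemma gammaCover_seq (h : X → ℝ) (v : ℕ → X → ℝ) (δ : ℝ)
    (hopen : ∀ j, ∀ a : ℝ, IsOpen {x | v j x - h x < a})
    (hnu : ∀ j, ∃ x, δ ≤ v j x - h x)
    (hev : ∀ x, {j | ¬ (v j x - h x < δ)}.Finite) :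
    {V | ∃ j : ℕ, V = {x | v j x - h x < δ}} ∈ OpenKindCovers X CoverKind.gamma := by
  set W : ℕ → Set X := fun j => {x | v j x - h x < δ} with hW
  have hfam : {V | ∃ j : ℕ, V = {x | v j x - h x < δ}} = Set.range W := by
    ext V; simp [hW, eq_comm]
  rw [hfam]
  have hbad : ∀ x : X, {V ∈ Set.range W | x ∉ V}.Finite := by
    intro x
    apply Set.Finite.subset ((hev x).image W)
    rintro V ⟨⟨j, rfl⟩, hxV⟩
    exact ⟨j, hxV, rfl⟩
  have hinf : (Set.range W).Infinite := by
    intro hfin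
    have hcover : (Set.univ : Set ℕ) ⊆ ⋃ V ∈ Set.range W, {j | W j = V} := by
      intro j _
      exact Set.mem_biUnion (Set.mem_range_self j) rfl
    have : ∃ V ∈ Set.range W, {j | W j = V}.Infinite := by
      by_contra hc
      push_neg at hc
      have : (Set.univ : Set ℕ).Finite :=
        Set.Finite.subset (Set.Finite.biUnion hfin fun V hV =>
          hc V hV) hcover
      exact Set.infinite_univ this
    obtain ⟨V, ⟨j₀, rfl⟩, hVinf⟩ := this
    obtain ⟨x, hx⟩ := hnu j₀
    have hxW : x ∉ W j₀ := by simpa [hW] using hx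
    apply hVinf
    apply Set.Finite.subset (hev x)
    intro j hj
    simp only [Set.mem_setOf_eq] at hj ⊢
    intro hlt
    exact hxW (hj ▸ (show x ∈ W j from hlt))
  refine ⟨?_, ?_, hinf, hbad⟩
  · rintro V ⟨j, rfl⟩; exact hopen j δ
  · intro x
    obtain ⟨V, hV⟩ := (hinf.diff (hbad x)).nonempty
    refine ⟨V, hV.1, ?_⟩
    by_contra hxV
    exact hV.2 ⟨hV.1, hxV⟩

lemma gammaCover_set (h : X → ℝ) (G : Set (X → ℝ)) (δ : ℝ)
    (hopen : ∀ g ∈ G, ∀ a : ℝ, IsOpen {x | g x - h x < a})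
    (hnu : ∀ g ∈ G, ∃ x, δ ≤ g x - h x)
    (hGinf : G.Infinite)
    (hfin : ∀ x, {g ∈ G | ¬ (g x - h x < δ)}.Finite) :
    {V | ∃ g ∈ G, V = {x | g x - h x < δ}} ∈ OpenKindCovers X CoverKind.gamma := by
  set W : (X → ℝ) → Set X := fun g => {x | g x - h x < δ} with hW
  have hfam : {V | ∃ g ∈ G, V = {x | g x - h x < δ}} = W '' G := by
    ext V; simp [hW, eq_comm]
  rw [hfam]
  have hbad : ∀ x : X, {V ∈ W '' G | x ∉ V}.Finite := by
    intro x
    apply Set.Finite.subset ((hfin x).image W)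
    rintro V ⟨⟨g, hg, rfl⟩, hxV⟩
    exact ⟨g, ⟨hg, hxV⟩, rfl⟩
  have hinf : (W '' G).Infinite := by
    intro hfinfam
    have hcover : G ⊆ ⋃ V ∈ W '' G, {g ∈ G | W g = V} := by
      intro g hg
      exact Set.mem_biUnion (Set.mem_image_of_mem W hg) ⟨hg, rfl⟩
    have : ∃ V ∈ W '' G, {g ∈ G | W g = V}.Infinite := by
      by_contra hc
      push_neg at hc
      exact hGinf (Set.Finite.subset (Set.Finite.biUnion hfinfam fun V hV =>
        hc V hV) hcover)
    obtain ⟨V, ⟨g₀, hg₀, rfl⟩, hVinf⟩ := this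
    obtain ⟨x, hx⟩ := hnu g₀ hg₀
    have hxW : x ∉ W g₀ := by simpa [hW] using hx
    apply hVinf
    apply Set.Finite.subset (hfin x)
    rintro g ⟨hgG, hj⟩
    refine ⟨hgG, fun hlt => hxW (hj ▸ (show x ∈ W g from hlt))⟩
  refine ⟨?_, ?_, hinf, hbad⟩
  · rintro V ⟨g, hg, rfl⟩; exact hopen g hg δ
  · intro x
    obtain ⟨V, hV⟩ := (hinf.diff (hbad x)).nonempty
    refine ⟨V, hV.1, ?_⟩
    by_contra hxV
    exact hV.2 ⟨hV.1, hxV⟩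

lemma engine {Φ : CoverKind}
    (hS1 : S1 (OpenKindCovers X Φ) (OpenKindCovers X CoverKind.omega))
    (h : X → ℝ) (T : ℕ → Set (X → ℝ))
    (hle : ∀ n, ∀ g ∈ T n, h ≤ g)
    (hneq : ∀ n, ∀ g ∈ T n, g ≠ h)
    (hne : ∀ n, (T n).Nonempty)
    (hcov : ∀ (n : ℕ) (δ : ℝ), 0 < δ → (∀ g ∈ T n, ∃ x, δ ≤ g x - h x) →
      ∃ F ⊆ T n, {V | ∃ g ∈ F, V = {x | g x - h x < δ}} ∈ OpenKindCovers X Φ) :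
    ∃ f : ℕ → (X → ℝ), (∀ n, f n ∈ T n) ∧ h ∉ Set.range f ∧ h ∈ closure (Set.range f) := by
  have key : ∀ m : ℕ, ∃ Fm : ℕ → (X → ℝ), (∀ k, Fm k ∈ T (Nat.pair m k)) ∧
      ∀ K : Finset X, ∃ k, ∀ x ∈ K, Fm k x - h x < 1/((m:ℝ)+1) := by
    intro m
    have hδ : (0:ℝ) < 1/((m:ℝ)+1) := by positivity
    by_cases hgood : ∃ k, ∃ g ∈ T (Nat.pair m k), ∀ x, g x - h x < 1/((m:ℝ)+1)
    · obtain ⟨k₀, g₀, hg₀T, hg₀⟩ := hgood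
      refine ⟨fun k => if k = k₀ then g₀ else (hne (Nat.pair m k)).choose,
        fun k => ?_, fun K => ⟨k₀, fun x _ => by simpa using hg₀ x⟩⟩
      by_cases hk : k = k₀
      · subst hk; simpa using hg₀T
      · simpa [hk] using (hne (Nat.pair m k)).choose_spec
    · push_neg at hgood
      have hc : ∀ k, ∃ F ⊆ T (Nat.pair m k),
          {V | ∃ g ∈ F, V = {x | g x - h x < 1/((m:ℝ)+1)}} ∈ OpenKindCovers X Φ := by
        intro k
        refine hcov _ _ hδ ?_
        intro g hg
        obtain ⟨x, hx⟩ := hgood k g hg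
        exact ⟨x, hx⟩
      choose F hFsub hFcov using hc
      obtain ⟨Vsel, hVmem, hVomega⟩ := hS1 _ hFcov
      have hsel : ∀ k, ∃ g ∈ F k, Vsel k = {x | g x - h x < 1/((m:ℝ)+1)} := fun k => hVmem k
      choose gs hgsF hgsV using hsel
      refine ⟨gs, fun k => hFsub k (hgsF k), fun K => ?_⟩
      obtain ⟨U, hU, hKU⟩ := hVomega.2.2.2 (K : Set X) K.finite_toSet
      obtain ⟨k, rfl⟩ := hU
      refine ⟨k, fun x hx => ?_⟩
      have := hKU hx
      rw [hgsV k] at this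
      exact this
  choose Fm hFm1 hFm2 using key
  refine ⟨fun n => Fm (Nat.unpair n).1 (Nat.unpair n).2, fun n => ?_, ?_, ?_⟩
  · have := hFm1 (Nat.unpair n).1 (Nat.unpair n).2
    rwa [Nat.pair_unpair] at this
  · rintro ⟨n, hn⟩
    have h1 := hFm1 (Nat.unpair n).1 (Nat.unpair n).2
    rw [Nat.pair_unpair] at h1
    exact hneq n _ h1 hn
  · rw [memClosurePiR]
    intro K ε hε
    obtain ⟨m, hm⟩ := exists_nat_one_div_lt hε
    obtain ⟨k, hk⟩ := hFm2 m K
    refine ⟨Fm m k, ⟨Nat.pair m k, by simp [Nat.unpair_pair]⟩, fun x hx => ?_⟩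
    have h1 := hk x hx
    have h2 : h x ≤ Fm m k x := hle _ _ (hFm1 m k) x
    rw [abs_of_nonneg (by linarith)]
    linarith

lemma aux_sep_of_a {Φ : CoverKind} (hΦ : Φ = CoverKind.omega ∨ Φ = CoverKind.gamma)
    (ha : S1 (upTilde Φ (USCb X)) (Dfam (USCb X))) : SeparableSet (USCb X) := by
  obtain ⟨sel, -, hd⟩ := ha (fun _ => USCb X) (fun _ => mem_upTilde_self hΦ)
  exact ⟨Set.range sel, Set.countable_range _, hd⟩

lemma aux_cov_of_a {Φ : CoverKind} (hΦ : Φ = CoverKind.omega ∨ Φ = CoverKind.gamma)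
    (ha : S1 (upTilde Φ (USCb X)) (Dfam (USCb X))) :
    S1 (OpenKindCovers X Φ) (OpenKindCovers X CoverKind.omega) := by
  intro u hu
  set V : ℕ → Set (Set X) := fun n => u n \ {Set.univ} with hV
  have hVopen : ∀ n, ∀ U ∈ V n, IsOpen U := fun n U hU => (hu n).1 U hU.1
  have hVmem : ∀ n, V n ∈ OpenKindCovers X Φ := by
    intro n
    rcases hΦ with rfl | rfl
    · have : V n = u n := Set.diff_singleton_eq_self (hu n).2.2.1
      rw [this]; exact hu n
    · obtain ⟨hop, hcv, hinf, hfin⟩ := hu n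
      have hbad : ∀ x : X, {U | U ∈ V n ∧ x ∉ U}.Finite := by
        intro x
        apply Set.Finite.subset (hfin x)
        rintro U ⟨hU, hxU⟩
        exact ⟨hU.1, hxU⟩
      have hVinf : (V n).Infinite := hinf.diff (Set.finite_singleton _)
      refine ⟨hVopen n, ?_, hVinf, hbad⟩
      intro x
      obtain ⟨U, hU⟩ := (hVinf.diff (hbad x)).nonempty
      refine ⟨U, hU.1, ?_⟩
      by_contra hxU
      exact hU.2 ⟨hU.1, hxU⟩
  have hVfs : Φ = CoverKind.omega →
      ∀ n, ∀ F : Set X, F.Finite → ∃ U ∈ V n, F ⊆ U := by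
    rintro rfl n F hF
    exact (hVmem n).2.2.2 F hF
  have hSU : ∀ n, SU (V n) ∈ upTilde Φ (USCb X) := by
    intro n
    have hSUsub : SU (V n) ⊆ USCb X := by
      rintro - ⟨U, hU, g, hg, rfl⟩
      exact usc_add (fU_mem_USCb (hVopen n U hU) g) hg
    rcases hΦ with rfl | rfl
    · refine ⟨hSUsub, ?_⟩
      intro f hf
      rintro g₀ ⟨hg₀H, hfg₀⟩
      rw [memClosurePiR]
      intro K ε hε
      obtain ⟨U, hU, hKU⟩ := hVfs rfl n (K : Set X) K.finite_toSet
      have hbpos : ∀ x ∈ K, (0:ℝ) ≤ g₀ x - f x := fun x _ => by linarith [hfg₀ x]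
      set sbb := bump K (fun x => g₀ x - f x) with hsbb
      have hsH : sbb ∈ USCb X := usc_bump _ _ hbpos
      set g := f + sbb with hg
      have hgH : g ∈ USCb X := usc_add hf hsH
      refine ⟨fU U g + g, ⟨⟨U, hU, g, hgH, rfl⟩, ?_, ?_⟩, ?_⟩
      · intro x
        simp only [Pi.add_apply]
        have := fU_nonneg U g x
        have := bump_nonneg hbpos x
        simp only [hg, Pi.add_apply]
        linarith
      · have heq : fU U g + g - f = fU U g + sbb := by
          funext x; simp [hg, Pi.sub_apply, Pi.add_apply]; ring
        rw [heq]
        exact usc_add (fU_mem_USCb (hVopen n U hU) g) hsH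
      · intro x hx
        have h1 : fU U g x = 0 := fU_apply_of_mem (hKU hx) g
        have h2 : g x = g₀ x := by
          simp only [hg, Pi.add_apply, hsbb, bump_apply_mem hx]; ring
        simp only [Pi.add_apply, h1, h2]
        simpa using hε
    · refine ⟨hSUsub, ?_⟩
      intro f hf
      have hVinf : (V n).Infinite := (hVmem n).2.2.1
      set e := hVinf.natEmbedding with he
      refine ⟨fun j => fU (e j : Set X) f + f, fun j => ?_, ?_⟩
      · refine ⟨⟨(e j : Set X), (e j).2, f, hf, rfl⟩, ?_, ?_⟩
        · intro x
          simp only [Pi.add_apply]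
          linarith [fU_nonneg (e j : Set X) f x]
        · have heq : fU (e j : Set X) f + f - f = fU (e j : Set X) f := by
            funext x; simp [Pi.sub_apply, Pi.add_apply]
          rw [heq]
          exact fU_mem_USCb (hVopen n _ (e j).2) f
      · rw [tendsto_pi_nhds]
        intro x
        have hbadfin : {j : ℕ | x ∉ (e j : Set X)}.Finite := by
          have hb2 := (hVmem n).2.2.2 x
          have hEqset : {j : ℕ | x ∉ (e j : Set X)} =
              (fun j : ℕ => (e j : Set X)) ⁻¹' {U | U ∈ V n ∧ x ∉ U} := by
            ext j
            simp only [Set.mem_setOf_eq, Set.mem_preimage]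
            exact ⟨fun hj => ⟨(e j).2, hj⟩, fun hj => hj.2⟩
          rw [hEqset]
          apply Set.Finite.preimage ?_ hb2
          intro j₁ _ j₂ _ hj
          exact e.injective (Subtype.ext hj)
        have hev : ∀ᶠ j in Filter.atTop, (fU (e j : Set X) f + f) x = f x := by
          rw [← Nat.cofinite_eq_atTop, Filter.eventually_cofinite]
          apply Set.Finite.subset hbadfin
          intro j hj
          simp only [Set.mem_setOf_eq] at hj ⊢
          intro hxe
          apply hj
          simp [Pi.add_apply, fU_apply_of_mem hxe]
        exact Filter.Tendsto.congr' (hev.mono fun j hj => hj.symm) tendsto_const_nhds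
  obtain ⟨sel, hselmem, hsub, hdense⟩ := ha _ hSU
  have hch : ∀ n, ∃ U ∈ V n, ∃ g ∈ USCb X, sel n = fU U g + g := fun n => hselmem n
  choose Us hUs gs hgsH hEq using hch
  refine ⟨Us, fun n => (hUs n).1, ?_⟩
  have hfs : ∀ F : Set X, F.Finite → ∃ W ∈ Set.range Us, F ⊆ W := by
    intro F hF
    have h0cl : (0 : X → ℝ) ∈ closure (Set.range sel) := hdense zero_mem_USCb
    rw [memClosurePiR] at h0cl
    obtain ⟨f, ⟨n, rfl⟩, hcl⟩ := h0cl hF.toFinset 1 one_pos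
    refine ⟨Us n, Set.mem_range_self n, fun x hx => ?_⟩
    by_contra hxU
    have h1 := hcl x (hF.mem_toFinset.2 hx)
    have h2 : 1 ≤ sel n x := by
      rw [hEq n]
      exact fU_add_self_ge_one hxU (hgsH n)
    simp only [Pi.zero_apply, sub_zero] at h1
    rw [abs_of_nonneg (by linarith)] at h1
    linarith
  refine ⟨?_, ?_, ?_, hfs⟩
  · rintro - ⟨n, rfl⟩
    exact (hu n).1 _ (hUs n).1
  · intro x
    obtain ⟨W, hW, hxW⟩ := hfs {x} (Set.finite_singleton x)
    exact ⟨W, hW, hxW rfl⟩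
  · rintro ⟨n, hn⟩
    exact (hUs n).2 (Set.mem_singleton_iff.2 hn)

lemma aux_bc {Φ : CoverKind} (hΦ : Φ = CoverKind.omega ∨ Φ = CoverKind.gamma)
    (hcov : S1 (OpenKindCovers X Φ) (OpenKindCovers X CoverKind.omega)) :
    ∀ h ∈ USCb X, S1 (PhiH Φ h (USCb X)) (PhiH CoverKind.omega h (USCb X)) := by
  intro h hh u hu
  set T : ℕ → Set (X → ℝ) := fun n => u n \ {h} with hT
  have hTsub : ∀ n, T n ⊆ u n := fun n => Set.diff_subset
  have hle : ∀ n, ∀ g ∈ T n, h ≤ g := fun n g hg => ((hu n).2.2 g (hg.1)).1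
  have hgh : ∀ n, ∀ g ∈ T n, g - h ∈ USCb X := fun n g hg => ((hu n).2.2 g (hg.1)).2
  have hneq : ∀ n, ∀ g ∈ T n, g ≠ h := fun n g hg => hg.2
  have hopen : ∀ n, ∀ g ∈ T n, ∀ a : ℝ, IsOpen {x | g x - h x < a} := by
    intro n g hg a
    have := (hgh n g hg).1 a
    simpa [Pi.sub_apply] using this
  have hne : ∀ n, (T n).Nonempty := by
    intro n
    rcases hΦ with rfl | rfl
    · obtain ⟨hnm, hcl⟩ := (hu n).2.1
      have hune : (u n).Nonempty := by
        rcases (u n).eq_empty_or_nonempty with he | hx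
        · exfalso; rw [he, closure_empty] at hcl; simpa using hcl
        · exact hx
      obtain ⟨g, hg⟩ := hune
      refine ⟨g, hg, fun hgs => hnm ?_⟩
      rw [Set.mem_singleton_iff] at hgs
      rwa [← hgs]
    · exact ((hu n).2.1.1.diff (Set.finite_singleton h)).nonempty
  have hcovT : ∀ (n : ℕ) (δ : ℝ), 0 < δ → (∀ g ∈ T n, ∃ x, δ ≤ g x - h x) →
      ∃ F ⊆ T n, {V | ∃ g ∈ F, V = {x | g x - h x < δ}} ∈ OpenKindCovers X Φ := by
    intro n δ hδ hfar
    rcases hΦ with rfl | rfl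
    · refine ⟨T n, Set.Subset.rfl, omegaCover_gen h (T n) δ (hopen n) hfar ?_⟩
      intro K
      obtain ⟨hnm, hcl⟩ := (hu n).2.1
      rw [memClosurePiR] at hcl
      obtain ⟨g, hg, hgK⟩ := hcl K δ hδ
      refine ⟨g, ⟨hg, fun hgs => hnm ?_⟩, fun x hx => ?_⟩
      · rw [Set.mem_singleton_iff] at hgs; rwa [← hgs]
      · calc g x - h x ≤ |g x - h x| := le_abs_self _
          _ < δ := hgK x hx
    · obtain ⟨hinf, hγ⟩ := (hu n).2.1
      refine ⟨T n, Set.Subset.rfl, gammaCover_set h (T n) δ (hopen n) hfar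
        (hinf.diff (Set.finite_singleton h)) ?_⟩
      intro x
      apply Set.Finite.subset (hγ δ hδ x)
      rintro g ⟨hgT, hglt⟩
      refine ⟨hgT.1, ?_⟩
      have h1 : h x ≤ g x := hle n g hgT x
      rw [abs_of_nonneg (by linarith)]
      linarith [not_lt.1 hglt]
  obtain ⟨f, hf1, hf2, hf3⟩ := engine hcov h T hle hneq hne hcovT
  refine ⟨f, fun n => (hf1 n).1, ?_⟩
  refine ⟨?_, ⟨hf2, hf3⟩, ?_⟩
  · rintro - ⟨n, rfl⟩
    exact (hu n).1 (hTsub n (hf1 n))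
  · rintro - ⟨n, rfl⟩
    exact (hu n).2.2 _ (hTsub n (hf1 n))

lemma aux_cb {Φ : CoverKind} (hΦ : Φ = CoverKind.omega ∨ Φ = CoverKind.gamma)
    (hc : ∀ h ∈ USCb X, S1 (PhiH Φ h (USCb X)) (PhiH CoverKind.omega h (USCb X))) :
    S1 (OpenKindCovers X Φ) (OpenKindCovers X CoverKind.omega) := by
  intro u hu
  set ind : Set X → (X → ℝ) := fun U => Uᶜ.indicator (fun _ => (1:ℝ)) with hind
  have hindmem : ∀ (U : Set X) (x : X), x ∈ U → ind U x = 0 := fun U x hx =>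
    Set.indicator_of_notMem (by simpa using hx) _
  have hindnot : ∀ (U : Set X) (x : X), x ∉ U → ind U x = 1 := fun U x hx =>
    Set.indicator_of_mem (by simpa using hx) _
  have hFmem : ∀ n, ind '' (u n) ∈ PhiH Φ 0 (USCb X) := by
    intro n
    obtain ⟨hop, hks⟩ := hu n
    refine ⟨?_, ?_, ?_⟩
    · rintro f ⟨U, hU, rfl⟩
      exact usc_indicator_closed (isClosed_compl_iff.2 (hop U hU)) zero_le_one
    · rcases hΦ with rfl | rfl
      · obtain ⟨hcov, hnu, hfs⟩ := hks
        constructor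
        · rintro ⟨U, hU, hEq⟩
          apply hnu
          have hUuniv : U = Set.univ := by
            ext x
            simp only [Set.mem_univ, iff_true]
            by_contra hx
            have hc := congrFun hEq x
            rw [hindnot U x hx] at hc
            norm_num at hc
          exact hUuniv ▸ hU
        · rw [memClosurePiR]
          intro K ε hε
          obtain ⟨U, hU, hKU⟩ := hfs K K.finite_toSet
          exact ⟨ind U, ⟨U, hU, rfl⟩, fun x hx => by
            rw [hindmem U x (hKU hx)]; simpa using hε⟩
      · obtain ⟨hcov, hinf, hfin⟩ := hks
        constructor
        · apply Set.Infinite.image ?_ hinf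
          intro U hU V hV hEq
          ext x
          by_cases hxU : x ∈ U <;> by_cases hxV : x ∈ V
          · simp [hxU, hxV]
          · exfalso
            have hc := congrFun hEq x
            rw [hindmem U x hxU, hindnot V x hxV] at hc
            norm_num at hc
          · exfalso
            have hc := congrFun hEq x
            rw [hindnot U x hxU, hindmem V x hxV] at hc
            norm_num at hc
          · simp [hxU, hxV]
        · intro ε hε x
          apply Set.Finite.subset ((hfin x).image ind)
          rintro f ⟨⟨U, hU, rfl⟩, hfar⟩
          refine ⟨U, ⟨hU, fun hxU => ?_⟩, rfl⟩
          rw [hindmem U x hxU] at hfar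
          simp at hfar
          linarith
    · rintro f ⟨U, hU, rfl⟩
      refine ⟨fun x => Set.indicator_nonneg (fun _ _ => zero_le_one) x, ?_⟩
      rw [sub_zero]
      exact usc_indicator_closed (isClosed_compl_iff.2 (hop U hU)) zero_le_one
  obtain ⟨sel, hselmem, hrange⟩ := hc 0 zero_mem_USCb _ hFmem
  obtain ⟨-, ⟨h0nr, h0cl⟩, -⟩ := hrange
  have hUsel : ∀ n, ∃ U ∈ u n, ind U = sel n := fun n => hselmem n
  choose Us hUs1 hUs2 using hUsel
  refine ⟨Us, hUs1, ?_⟩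
  have hfs : ∀ F : Set X, F.Finite → ∃ V ∈ Set.range Us, F ⊆ V := by
    intro F hF
    rw [memClosurePiR] at h0cl
    obtain ⟨f, ⟨n, rfl⟩, hcl⟩ := h0cl hF.toFinset 1 one_pos
    refine ⟨Us n, Set.mem_range_self n, fun x hx => ?_⟩
    by_contra hxU
    have hc := hcl x (hF.mem_toFinset.2 hx)
    rw [← hUs2 n, hindnot _ x hxU] at hc
    norm_num at hc
  refine ⟨?_, ?_, ?_, hfs⟩
  · rintro V ⟨n, rfl⟩
    exact (hu n).1 _ (hUs1 n)
  · intro x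
    obtain ⟨V, hV, hxV⟩ := hfs {x} (Set.finite_singleton x)
    exact ⟨V, hV, hxV rfl⟩
  · rintro ⟨n, hn⟩
    apply h0nr
    refine ⟨n, ?_⟩
    rw [← hUs2 n, hn]
    funext x
    exact hindmem _ x (Set.mem_univ x)

lemma aux_bd {Φ : CoverKind} (hΦ : Φ = CoverKind.omega ∨ Φ = CoverKind.gamma)
    (hcov : S1 (OpenKindCovers X Φ) (OpenKindCovers X CoverKind.omega)) :
    ∀ h ∈ USCb X, S1 (upTilde Φ (USCb X)) {F | PropOmega h F} := by
  intro h hh S hS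
  set T : ℕ → Set (X → ℝ) := fun n =>
    {g | g ∈ S n ∧ h ≤ g ∧ g - h ∈ USCb X ∧ g ≠ h} with hT
  have hle : ∀ n, ∀ g ∈ T n, h ≤ g := fun n g hg => hg.2.1
  have hneq : ∀ n, ∀ g ∈ T n, g ≠ h := fun n g hg => hg.2.2.2
  have hopen : ∀ n, ∀ g ∈ T n, ∀ a : ℝ, IsOpen {x | g x - h x < a} := by
    intro n g hg a
    have := hg.2.2.1.1 a
    simpa [Pi.sub_apply] using this
  rcases hΦ with rfl | rfl
  · -- Φ = Ω, upper dense sets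
    have key : ∀ (n : ℕ) (K : Finset X) (δ : ℝ), 0 < δ →
        ∃ g ∈ T n, ∀ x ∈ K, g x - h x < δ := by
      intro n K δ hδ
      obtain ⟨hsub, hdense⟩ := hS n
      obtain ⟨x₀, hx₀⟩ := Infinite.exists_notMem_finset K
      have hbpos : ∀ x ∈ ({x₀} : Finset X), (0:ℝ) ≤ δ/2 := fun _ _ => by positivity
      set b := bump ({x₀} : Finset X) (fun _ => δ/2) with hb
      have hbH : b ∈ USCb X := usc_bump _ _ hbpos
      have hbnn : ∀ x, 0 ≤ b x := bump_nonneg hbpos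
      set p := h + b with hp
      have hpH : p ∈ USCb X := usc_add hh hbH
      have hhp : h ≤ p := le_add_of_nonneg_fun hbnn
      have hpcl := hdense h hh ⟨hpH, hhp⟩
      rw [memClosurePiR] at hpcl
      obtain ⟨g, ⟨hgS, hhg, hghH⟩, hgp⟩ := hpcl (insert x₀ K) (δ/2) (by positivity)
      have hgx₀ : g ≠ h := by
        intro hgeq
        have h1 := hgp x₀ (Finset.mem_insert_self _ _)
        have h2 : p x₀ = h x₀ + δ/2 := by
          rw [hp]; simp [hb, bump]
        rw [hgeq, h2] at h1
        rw [abs_sub_comm] at h1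
        rw [abs_of_nonneg (by linarith)] at h1
        linarith
      refine ⟨g, ⟨hgS, hhg, hghH, hgx₀⟩, fun x hx => ?_⟩
      have h1 := hgp x (Finset.mem_insert_of_mem hx)
      have h2 : p x = h x := by
        have hxx : x ≠ x₀ := fun hxx => hx₀ (hxx ▸ hx)
        rw [hp]; simp [hb, bump, hxx]
      rw [h2] at h1
      calc g x - h x ≤ |g x - h x| := le_abs_self _
        _ < δ/2 := h1
        _ < δ := by linarith
    have hne : ∀ n, (T n).Nonempty := by
      intro n
      obtain ⟨g, hg, -⟩ := key n ∅ 1 one_pos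
      exact ⟨g, hg⟩
    have hcovT : ∀ (n : ℕ) (δ : ℝ), 0 < δ → (∀ g ∈ T n, ∃ x, δ ≤ g x - h x) →
        ∃ F ⊆ T n, {V | ∃ g ∈ F, V = {x | g x - h x < δ}} ∈
          OpenKindCovers X CoverKind.omega := by
      intro n δ hδ hfar
      exact ⟨T n, Set.Subset.rfl, omegaCover_gen h (T n) δ (hopen n) hfar
        fun K => key n K δ hδ⟩
    obtain ⟨f, hf1, hf2, hf3⟩ := engine hcov h T hle hneq hne hcovT
    exact ⟨f, fun n => (hf1 n).1, hf2, hf3⟩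
  · -- Φ = Γ, upper sequentially dense sets
    have key : ∀ (n : ℕ) (δ : ℝ), 0 < δ → ∃ v : ℕ → (X → ℝ),
        (∀ j, v j ∈ T n) ∧ ∀ x, ∀ᶠ j in Filter.atTop, v j x - h x < δ := by
      intro n δ hδ
      obtain ⟨hsub, hseq⟩ := hS n
      obtain ⟨x₀⟩ : Nonempty X := inferInstance
      have hbpos : ∀ x ∈ ({x₀} : Finset X), (0:ℝ) ≤ δ/2 := fun _ _ => by positivity
      set b := bump ({x₀} : Finset X) (fun _ => δ/2) with hb
      have hbH : b ∈ USCb X := usc_bump _ _ hbpos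
      have hbnn : ∀ x, 0 ≤ b x := bump_nonneg hbpos
      have hble : ∀ x, b x ≤ δ/2 := by
        intro x
        rw [hb]
        unfold bump
        split
        · exact le_refl _
        · positivity
      set p := h + b with hp
      have hpH : p ∈ USCb X := usc_add hh hbH
      obtain ⟨v, hv1, hv2⟩ := hseq p hpH
      refine ⟨v, fun j => ?_, fun x => ?_⟩
      · obtain ⟨hvS, hpv, hvpH⟩ := hv1 j
        refine ⟨hvS, le_trans (le_add_of_nonneg_fun hbnn) hpv, ?_, ?_⟩
        · have : v j - h = (v j - p) + b := by
            funext x; simp [hp, Pi.sub_apply, Pi.add_apply]; ring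
          rw [this]
          exact usc_add hvpH hbH
        · intro hveq
          have h1 := hpv x₀
          have h2 : p x₀ = h x₀ + δ/2 := by
            rw [hp]; simp [hb, bump]
          rw [hveq] at h1
          rw [h2] at h1
          linarith
      · have hlim : Filter.Tendsto (fun j => v j x) Filter.atTop (nhds (p x)) :=
          (tendsto_pi_nhds.1 hv2) x
        have hplt : p x < h x + δ := by
          have := hble x
          simp only [hp, Pi.add_apply]
          linarith
        have := hlim.eventually_lt_const hplt
        filter_upwards [this] with j hj
        linarith
    have hne : ∀ n, (T n).Nonempty := by
      intro n
      obtain ⟨v, hv, -⟩ := key n 1 one_pos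
      exact ⟨v 0, hv 0⟩
    have hcovT : ∀ (n : ℕ) (δ : ℝ), 0 < δ → (∀ g ∈ T n, ∃ x, δ ≤ g x - h x) →
        ∃ F ⊆ T n, {V | ∃ g ∈ F, V = {x | g x - h x < δ}} ∈
          OpenKindCovers X CoverKind.gamma := by
      intro n δ hδ hfar
      obtain ⟨v, hvT, hvev⟩ := key n δ hδ
      refine ⟨Set.range v, ?_, ?_⟩
      · rintro - ⟨j, rfl⟩; exact hvT j
      · have hfam : {V | ∃ g ∈ Set.range v, V = {x | g x - h x < δ}} =
            {V | ∃ j : ℕ, V = {x | v j x - h x < δ}} := by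
          ext V
          constructor
          · rintro ⟨-, ⟨j, rfl⟩, rfl⟩; exact ⟨j, rfl⟩
          · rintro ⟨j, rfl⟩; exact ⟨v j, Set.mem_range_self j, rfl⟩
        rw [hfam]
        refine gammaCover_seq h v δ (fun j => hopen n (v j) (hvT j)) ?_ ?_
        · intro j; exact hfar (v j) (hvT j)
        · intro x
          have hx := hvev x
          rw [← Nat.cofinite_eq_atTop, Filter.eventually_cofinite] at hx
          simpa using hx
    obtain ⟨f, hf1, hf2, hf3⟩ := engine hcov h T hle hneq hne hcovT
    exact ⟨f, fun n => (hf1 n).1, hf2, hf3⟩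

lemma aux_da {Φ : CoverKind} (hsep : SeparableSet (USCb X))
    (hd : ∀ h ∈ USCb X, S1 (upTilde Φ (USCb X)) {F | PropOmega h F}) :
    S1 (upTilde Φ (USCb X)) (Dfam (USCb X)) := by
  obtain ⟨D, hDc, hDsub, hDd⟩ := hsep
  have hDne : D.Nonempty := by
    rcases D.eq_empty_or_nonempty with rfl | hne
    · exfalso
      have := hDd (zero_mem_USCb (X := X))
      simpa using this
    · exact hne
  obtain ⟨e, he⟩ := hDc.exists_eq_range hDne
  intro S hS
  have key : ∀ m : ℕ, ∃ g : ℕ → (X → ℝ), (∀ k, g k ∈ S (Nat.pair m k)) ∧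
      PropOmega (e m) (Set.range g) := by
    intro m
    have hem : e m ∈ USCb X := hDsub (he ▸ Set.mem_range_self m)
    obtain ⟨g, hg1, hg2⟩ := hd (e m) hem (fun k => S (Nat.pair m k)) (fun k => hS _)
    exact ⟨g, hg1, hg2⟩
  choose g hg1 hg2 using key
  refine ⟨fun n => g (Nat.unpair n).1 (Nat.unpair n).2, fun n => ?_, ?_, ?_⟩
  · have := hg1 (Nat.unpair n).1 (Nat.unpair n).2
    rwa [Nat.pair_unpair] at this
  · rintro - ⟨n, rfl⟩
    have h1 := hg1 (Nat.unpair n).1 (Nat.unpair n).2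
    rw [Nat.pair_unpair] at h1
    exact upTilde_sub (hS n) h1
  · have hsub1 : D ⊆ closure (Set.range fun n => g (Nat.unpair n).1 (Nat.unpair n).2) := by
      rw [he]
      rintro - ⟨m, rfl⟩
      refine closure_mono ?_ ((hg2 m).2)
      rintro - ⟨k, rfl⟩
      exact ⟨Nat.pair m k, by simp [Nat.unpair_pair]⟩
    intro f hf
    exact (closure_minimal hsub1 isClosed_closure) (hDd hf)

end Main

/-- For Φ ∈ {Ω, Γ} and X infinite Hausdorff, TFAE:
(a) USC*_p(X) satisfies S₁(Φ̃↑, 𝒟);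
(b) USC*_p(X) is separable and X is an S₁(Φ,Ω)-space;
(c) USC*_p(X) is separable and satisfies S₁(Φ_h,Ω_h) for every h ∈ USC*_p(X);
(d) USC*_p(X) is separable and satisfies S₁(Φ̃↑,Ω_h) for every h ∈ USC*_p(X). -/
theorem statement7 {X : Type*} [TopologicalSpace X] [T2Space X] [Infinite X]
    (Φ : CoverKind) (hΦ : Φ = CoverKind.omega ∨ Φ = CoverKind.gamma) :
    List.TFAE [
      S1 (upTilde Φ (USCb X)) (Dfam (USCb X)),
      SeparableSet (USCb X) ∧
        S1 (OpenKindCovers X Φ) (OpenKindCovers X CoverKind.omega),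
      SeparableSet (USCb X) ∧
        ∀ h ∈ USCb X, S1 (PhiH Φ h (USCb X)) (PhiH CoverKind.omega h (USCb X)),
      SeparableSet (USCb X) ∧
        ∀ h ∈ USCb X, S1 (upTilde Φ (USCb X)) {F | PropOmega h F}] := by
  tfae_have 1 → 2 := fun ha => ⟨aux_sep_of_a hΦ ha, aux_cov_of_a hΦ ha⟩
  tfae_have 2 → 3 := fun hb => ⟨hb.1, aux_bc hΦ hb.2⟩
  tfae_have 3 → 2 := fun hc => ⟨hc.1, aux_cb hΦ hc.2⟩
  tfae_have 2 → 4 := fun hb => ⟨hb.1, aux_bd hΦ hb.2⟩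
  tfae_have 4 → 1 := fun hd => aux_da hd.1 hd.2
  tfae_finish

end Selectors
end
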